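/- arXiv:2404.03409 — 11 statements merged into one kernel-verified Lean document; each statement's English description precedes it below -/
import Mathlib

section
/- Let a, b, ω > 0 and σ = −a²b. If φ = (x, y) : [0, ∞) → ℝ² is a solution of the bistable oscillator with x(0)² + y(0)² < a, then x(t)² + y(t)² < a for all t ≥ 0 and x(t)² + y(t)² → 0 as t → ∞ (the origin attracts the open disk of squared radius a). -/
/-- for σ = -a²b the origin attracts the open disk of squared radius a. -/
theorem stmt_2 (a b ω σ : ℝ) (ha : 0 < a) (hb : 0 < b) (hω : 0 < ω)
    (hσ : σ = -a ^ 2 * b)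
    (x y : ℝ → ℝ)
    (hx : ∀ t ≥ (0 : ℝ), HasDerivAt x
      (-ω * y t + x t * (σ + 2 * a * b * (x t ^ 2 + y t ^ 2) - b * (x t ^ 2 + y t ^ 2) ^ 2)) t)
    (hy : ∀ t ≥ (0 : ℝ), HasDerivAt y
      (ω * x t + y t * (σ + 2 * a * b * (x t ^ 2 + y t ^ 2) - b * (x t ^ 2 + y t ^ 2) ^ 2)) t)
    (h0 : x 0 ^ 2 + y 0 ^ 2 < a) :
    (∀ t ≥ (0 : ℝ), x t ^ 2 + y t ^ 2 < a) ∧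
    Filter.Tendsto (fun t => x t ^ 2 + y t ^ 2) Filter.atTop (nhds 0) := by
  set r : ℝ → ℝ := fun t => x t ^ 2 + y t ^ 2 with hrdef
  have hrnn : ∀ t, 0 ≤ r t := fun t => by positivity
  have hr : ∀ t ≥ (0:ℝ), HasDerivAt r (-2 * b * r t * (r t - a) ^ 2) t := by
    intro t ht
    have h1 := ((hx t ht).pow 2).add ((hy t ht).pow 2)
    convert h1 using 1
    case e'_9 =>
      simp only [hrdef, hσ]
      ring
    all_goals rfl
  -- r is antitone on [0, ∞)
  have hanti : AntitoneOn r (Set.Ici (0:ℝ)) := by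
    apply antitoneOn_of_deriv_nonpos (convex_Ici 0)
    · intro t ht
      exact (hr t ht).continuousAt.continuousWithinAt
    · intro t ht
      rw [interior_Ici] at ht
      exact (hr t (le_of_lt ht)).differentiableAt.differentiableWithinAt
    · intro t ht
      rw [interior_Ici] at ht
      rw [(hr t (le_of_lt ht)).deriv]
      nlinarith [mul_nonneg (hrnn t) (sq_nonneg (r t - a)), hb.le]
  have hle : ∀ t ≥ (0:ℝ), r t ≤ r 0 := fun t ht =>
    hanti Set.self_mem_Ici ht ht
  have hlt : ∀ t ≥ (0:ℝ), r t < a := fun t ht => lt_of_le_of_lt (hle t ht) h0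
  refine ⟨hlt, ?_⟩
  set c : ℝ := 2 * b * (a - r 0) ^ 2 with hcdef
  have hc : 0 < c := by
    have h1 : (0:ℝ) < a - r 0 := sub_pos.mpr h0
    have h2 : (0:ℝ) < (a - r 0) ^ 2 := pow_pos h1 2
    rw [hcdef]; nlinarith
  -- h t = r t * exp (c t) is antitone on [0, ∞)
  set h : ℝ → ℝ := fun t => r t * Real.exp (c * t) with hhdef
  have hh : ∀ t ≥ (0:ℝ), HasDerivAt h
      ((-2 * b * r t * (r t - a) ^ 2) * Real.exp (c * t) + r t * (c * Real.exp (c * t))) t := by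
    intro t ht
    have he : HasDerivAt (fun t => Real.exp (c * t)) (c * Real.exp (c * t)) t := by
      have := ((hasDerivAt_id t).const_mul c).exp
      simpa [mul_comm] using this
    exact (hr t ht).mul he
  have hhanti : AntitoneOn h (Set.Ici (0:ℝ)) := by
    apply antitoneOn_of_deriv_nonpos (convex_Ici 0)
    · intro t ht
      exact (hh t ht).continuousAt.continuousWithinAt
    · intro t ht
      rw [interior_Ici] at ht
      exact (hh t (le_of_lt ht)).differentiableAt.differentiableWithinAt
    · intro t ht
      rw [interior_Ici] at ht
      rw [(hh t (le_of_lt ht)).deriv]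
      have h1 : r t ≤ r 0 := hle t (le_of_lt ht)
      have h0' : r 0 < a := h0
      have h2 : (a - r 0) ^ 2 ≤ (r t - a) ^ 2 := by
        nlinarith [mul_nonneg (sub_nonneg.mpr h1) (by linarith : (0:ℝ) ≤ 2 * a - r 0 - r t)]
      have h3 : 0 < Real.exp (c * t) := Real.exp_pos _
      have h4 : c ≤ 2 * b * (r t - a) ^ 2 := by
        rw [hcdef]; nlinarith
      nlinarith [hrnn t, mul_le_mul_of_nonneg_left h4 (hrnn t)]
  have hbound : ∀ t ≥ (0:ℝ), r t ≤ r 0 * Real.exp (-(c * t)) := by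
    intro t ht
    have := hhanti Set.self_mem_Ici ht ht
    simp only [hhdef, mul_zero, Real.exp_zero, mul_one] at this
    rw [Real.exp_neg, ← div_eq_mul_inv, le_div_iff₀ (Real.exp_pos _)]
    exact this
  -- squeeze
  have htop : Filter.Tendsto (fun t => r 0 * Real.exp (-(c * t))) Filter.atTop (nhds 0) := by
    have h1 : Filter.Tendsto (fun t : ℝ => c * t) Filter.atTop Filter.atTop :=
      Filter.Tendsto.const_mul_atTop hc Filter.tendsto_id
    have h2 := Real.tendsto_exp_neg_atTop_nhds_zero.comp h1
    have := h2.const_mul (r 0)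
    simpa using this
  refine tendsto_of_tendsto_of_tendsto_of_le_of_le' tendsto_const_nhds htop ?_ ?_
  · exact Filter.Eventually.of_forall fun t => hrnn t
  · filter_upwards [Filter.eventually_ge_atTop (0:ℝ)] with t ht using hbound t ht
end

section
/- Let a, b, ω > 0 and σ = −a²b. If φ = (x, y) : [0, ∞) → ℝ² is a solution of the bistable oscillator with x(0)² + y(0)² > a, then t ↦ x(t)² + y(t)² is nonincreasing, stays > a for all t ≥ 0, and converges to a as t → ∞; i.e., the limit cycle {x² + y² = a} attracts all trajectories starting outside it (it is semi-stable). -/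
/-- for σ = -a²b the circle x²+y² = a attracts all trajectories starting outside. -/
theorem stmt_3 (a b ω σ : ℝ) (ha : 0 < a) (hb : 0 < b) (hω : 0 < ω)
    (hσ : σ = -a ^ 2 * b)
    (x y : ℝ → ℝ)
    (hx : ∀ t ≥ (0 : ℝ), HasDerivAt x
      (-ω * y t + x t * (σ + 2 * a * b * (x t ^ 2 + y t ^ 2) - b * (x t ^ 2 + y t ^ 2) ^ 2)) t)
    (hy : ∀ t ≥ (0 : ℝ), HasDerivAt y
      (ω * x t + y t * (σ + 2 * a * b * (x t ^ 2 + y t ^ 2) - b * (x t ^ 2 + y t ^ 2) ^ 2)) t)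
    (h0 : a < x 0 ^ 2 + y 0 ^ 2) :
    AntitoneOn (fun t => x t ^ 2 + y t ^ 2) (Set.Ici (0 : ℝ)) ∧
    (∀ t ≥ (0 : ℝ), a < x t ^ 2 + y t ^ 2) ∧
    Filter.Tendsto (fun t => x t ^ 2 + y t ^ 2) Filter.atTop (nhds a) := by
  subst hσ
  set r : ℝ → ℝ := fun t => x t ^ 2 + y t ^ 2 with hrdef
  have hr0 : ∀ t, 0 ≤ r t := fun t => add_nonneg (sq_nonneg _) (sq_nonneg _)
  have h0' : a < r 0 := h0
  have hrd : ∀ t ≥ (0:ℝ), HasDerivAt r (-2 * b * r t * (r t - a) ^ 2) t := by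
    intro t ht
    have h3 := ((hx t ht).pow 2).add ((hy t ht).pow 2)
    refine h3.congr_deriv ?_
    push_cast
    simp only [hrdef]
    ring
  have hcont : ContinuousOn r (Set.Ici 0) :=
    fun t ht => (hrd t ht).continuousAt.continuousWithinAt
  -- Antitone
  have hanti : AntitoneOn r (Set.Ici 0) := by
    apply antitoneOn_of_deriv_nonpos (convex_Ici 0) hcont
    · intro t ht
      rw [interior_Ici] at ht
      exact (hrd t ht.le).differentiableAt.differentiableWithinAt
    · intro t ht
      rw [interior_Ici] at ht
      rw [(hrd t ht.le).deriv]
      nlinarith [mul_nonneg (mul_nonneg hb.le (hr0 t)) (sq_nonneg (r t - a))]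
  -- stays above a
  have hpos : ∀ t ≥ (0:ℝ), a < r t := by
    by_contra hc
    push_neg at hc
    obtain ⟨t₀, ht₀, hrt₀⟩ := hc
    set S : Set ℝ := {t | 0 ≤ t ∧ r t ≤ a} with hSdef
    have hSne : S.Nonempty := ⟨t₀, ht₀, hrt₀⟩
    have hSbdd : BddBelow S := ⟨0, fun s hs => hs.1⟩
    have hclosed : IsClosed S := by
      rw [← isOpen_compl_iff, isOpen_iff_mem_nhds]
      intro t ht
      simp only [hSdef, Set.mem_compl_iff, Set.mem_setOf_eq, not_and, not_le] at ht
      rcases lt_or_ge t 0 with h | h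
      · refine Filter.mem_of_superset (Iio_mem_nhds h) ?_
        intro s hs hsS
        exact absurd hsS.1 (not_le.mpr hs)
      · have hca : ContinuousAt r t := (hrd t h).continuousAt
        have hmem : r ⁻¹' Set.Ioi a ∈ nhds t := hca.preimage_mem_nhds (Ioi_mem_nhds (ht h))
        refine Filter.mem_of_superset hmem ?_
        intro s hs hsS
        exact absurd hsS.2 (not_le.mpr hs)
    set T := sInf S with hTdef
    have hTmem : T ∈ S := hclosed.csInf_mem hSne hSbdd
    have hT0 : 0 ≤ T := hTmem.1
    have hTpos : 0 < T := by
      rcases lt_or_eq_of_le hT0 with h | h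
      · exact h
      · exact absurd hTmem.2 (not_le.mpr (h ▸ h0))
    have hIco : ∀ t ∈ Set.Ico (0:ℝ) T, a < r t := by
      intro t ht
      by_contra hle
      exact absurd (csInf_le hSbdd ⟨ht.1, not_lt.mp hle⟩) (not_le.mpr ht.2)
    set v : ℝ → ℝ := fun t => (r t - a)⁻¹ with hvdef
    set C := 2 * b * r 0 with hCdef
    have hC : 0 < C := by
      have h1 : 0 < r 0 := lt_trans ha h0'
      simp only [hCdef]
      positivity
    have hvd : ∀ t ∈ Set.Ico (0:ℝ) T, HasDerivAt v (2 * b * r t) t := by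
      intro t ht
      have hgt := hIco t ht
      have hne : r t - a ≠ 0 := by linarith
      have h1 := ((hrd t ht.1).sub_const a).inv hne
      refine h1.congr_deriv ?_
      field_simp
    -- w := v0 + C t - v t is monotone on Ico 0 T
    set w : ℝ → ℝ := fun t => v 0 + C * t - v t with hwdef
    have hwd : ∀ t ∈ Set.Ico (0:ℝ) T, HasDerivAt w (C - 2 * b * r t) t := by
      intro t ht
      have hlin : HasDerivAt (fun s => v 0 + C * s) C t := by
        simpa using ((hasDerivAt_id t).const_mul C).const_add (v 0)
      exact hlin.sub (hvd t ht)
    have hwmono : MonotoneOn w (Set.Ico 0 T) := by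
      apply monotoneOn_of_deriv_nonneg (convex_Ico 0 T)
      · exact fun t ht => (hwd t ht).continuousAt.continuousWithinAt
      · intro t ht
        rw [interior_Ico] at ht
        exact (hwd t ⟨ht.1.le, ht.2⟩).differentiableAt.differentiableWithinAt
      · intro t ht
        rw [interior_Ico] at ht
        rw [(hwd t ⟨ht.1.le, ht.2⟩).deriv]
        have hle : r t ≤ r 0 := hanti Set.self_mem_Ici (Set.mem_Ici.mpr ht.1.le) ht.1.le
        simp only [hCdef]
        nlinarith
    have hv0 : 0 < v 0 := by
      have : 0 < r 0 - a := by linarith [h0']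
      simp only [hvdef]
      positivity
    have hkey : ∀ t ∈ Set.Ico (0:ℝ) T, 1 ≤ (r t - a) * (v 0 + C * t) := by
      intro t ht
      have hgt := hIco t ht
      have hrta : 0 < r t - a := by linarith
      have h1 : w 0 ≤ w t := hwmono (Set.mem_Ico.mpr ⟨le_refl 0, hTpos⟩) ht ht.1
      have hw0 : w 0 = 0 := by simp [hwdef]
      have h2 : v t ≤ v 0 + C * t := by
        have := h1
        rw [hw0] at this
        simp only [hwdef] at this
        linarith
      have h3 : (r t - a) * v t = 1 := by
        simp only [hvdef]
        field_simp
      calc (1:ℝ) = (r t - a) * v t := h3.symm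
        _ ≤ (r t - a) * (v 0 + C * t) := by
            exact mul_le_mul_of_nonneg_left h2 hrta.le
    -- take limit t → T⁻
    have hTcont : ContinuousAt r T := (hrd T hT0).continuousAt
    have htend : Filter.Tendsto (fun t => (r t - a) * (v 0 + C * t))
        (nhdsWithin T (Set.Iio T)) (nhds ((r T - a) * (v 0 + C * T))) := by
      apply Filter.Tendsto.mono_left _ nhdsWithin_le_nhds
      exact ((hTcont.sub continuousAt_const).mul
        (continuousAt_const.add (continuousAt_const.mul continuousAt_id)))
    have hev : ∀ᶠ t in nhdsWithin T (Set.Iio T), 1 ≤ (r t - a) * (v 0 + C * t) := by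
      filter_upwards [Ioo_mem_nhdsLT_of_mem (Set.mem_Ioc.mpr ⟨hTpos, le_refl T⟩)] with t ht
      exact hkey t ⟨ht.1.le, ht.2⟩
    have hne : (nhdsWithin T (Set.Iio T)).NeBot := nhdsLT_neBot T
    have hlim : 1 ≤ (r T - a) * (v 0 + C * T) := ge_of_tendsto htend hev
    have hrTa : r T ≤ a := hTmem.2
    have hv0CT : 0 < v 0 + C * T := by nlinarith [mul_nonneg hC.le hT0]
    nlinarith [mul_nonpos_of_nonpos_of_nonneg (by linarith : r T - a ≤ 0) hv0CT.le]
  -- convergence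
  have hrg : ∀ t ≥ (0:ℝ), r (max t 0) = r t := fun t ht => by rw [max_eq_left ht]
  set g : ℝ → ℝ := fun t => r (max t 0) with hgdef
  have hganti : Antitone g := by
    intro s t hst
    exact hanti (le_max_right s 0) (le_max_right t 0) (max_le_max hst le_rfl)
  have hgbdd : BddBelow (Set.range g) := by
    refine ⟨a, ?_⟩
    rintro z ⟨t, rfl⟩
    exact (hpos _ (le_max_right t 0)).le
  have hgL := tendsto_atTop_ciInf hganti hgbdd
  set L := ⨅ t, g t with hLdef
  have hrL : Filter.Tendsto r Filter.atTop (nhds L) := by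
    apply hgL.congr'
    filter_upwards [Filter.eventually_ge_atTop (0:ℝ)] with t ht
    exact hrg t ht
  have hLa : a ≤ L := le_ciInf fun t => (hpos _ (le_max_right t 0)).le
  have hLr : ∀ t ≥ (0:ℝ), L ≤ r t := by
    intro t ht
    have := ciInf_le hgbdd t
    rwa [show g t = r t from hrg t ht] at this
  have hLeq : L = a := by
    by_contra hne
    have hLgt : a < L := lt_of_le_of_ne hLa (Ne.symm hne)
    set c := 2 * b * L * (L - a) ^ 2 with hcdef
    have hcpos : 0 < c := by
      have hL0 : 0 < L := lt_trans ha hLgt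
      have h2 : 0 < (L - a) ^ 2 := pow_pos (by linarith) 2
      simp only [hcdef]
      exact mul_pos (mul_pos (mul_pos two_pos hb) hL0) h2
    have hhd : ∀ t ≥ (0:ℝ), HasDerivAt (fun t => r t + c * t) (-2 * b * r t * (r t - a) ^ 2 + c) t := by
      intro t ht
      have hlin : HasDerivAt (fun s => c * s) c t := by
        simpa using (hasDerivAt_id t).const_mul c
      exact (hrd t ht).add hlin
    have hA : AntitoneOn (fun t => r t + c * t) (Set.Ici 0) := by
      apply antitoneOn_of_deriv_nonpos (convex_Ici 0)
      · exact fun t ht => (hhd t ht).continuousAt.continuousWithinAt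
      · intro t ht
        rw [interior_Ici] at ht
        exact (hhd t ht.le).differentiableAt.differentiableWithinAt
      · intro t ht
        rw [interior_Ici] at ht
        rw [(hhd t ht.le).deriv]
        have h1 : L ≤ r t := hLr t ht.le
        have h2 : (L - a) ^ 2 ≤ (r t - a) ^ 2 := by nlinarith
        have h3 : L * (L - a) ^ 2 ≤ r t * (r t - a) ^ 2 :=
          mul_le_mul h1 h2 (by positivity) (by linarith)
        have h4 := mul_le_mul_of_nonneg_left h3 (by linarith : (0:ℝ) ≤ 2 * b)
        simp only [hcdef]
        nlinarith [h4]
    set t₁ := (r 0 - a) / c + 1 with ht₁def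
    have ht₁pos : 0 ≤ t₁ := by
      have : 0 ≤ (r 0 - a) / c := div_nonneg (by linarith [h0']) hcpos.le
      simp only [ht₁def]
      linarith
    have h1 : r t₁ + c * t₁ ≤ r 0 + c * 0 := hA Set.self_mem_Ici (Set.mem_Ici.mpr ht₁pos) ht₁pos
    have h2 : a < r t₁ := hpos t₁ ht₁pos
    have h3 : c * t₁ = (r 0 - a) + c := by
      simp only [ht₁def]
      field_simp
    have h2' := hpos t₁ ht₁pos
    linarith [h0']
  exact ⟨hanti, hpos, hLeq ▸ hrL⟩
end

section
/- Let a, b, ω > 0 and −a²b < σ < 0, and set γ₀ = √(a² + σ/b). If φ = (x, y) : [0, ∞) → ℝ² is a solution of the bistable oscillator with x(0)² + y(0)² > a − γ₀, then x(t)² + y(t)² → a + γ₀ as t → ∞; equivalently, the distance from φ(t) to the circle 𝒞₁ = {(x,y) : x² + y² = a + γ₀} tends to 0. That is, the set 𝒜ₗ = {(x,y) : x² + y² > a − γ₀} is contained in the region of attraction of the limit cycle 𝒞₁. -/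
open Set Filter Topology

private lemma ode_contOn {u f : ℝ → ℝ} (hu : ∀ t ≥ (0:ℝ), HasDerivAt u (f (u t)) t)
    {s : Set ℝ} (hs : s ⊆ Ici 0) : ContinuousOn u s :=
  fun t ht => ((hu t (hs ht)).continuousAt).continuousWithinAt

private lemma ode_monoOn {u f : ℝ → ℝ} (hu : ∀ t ≥ (0:ℝ), HasDerivAt u (f (u t)) t)
    {s : Set ℝ} (hs : s ⊆ Ici 0) (hconv : Convex ℝ s)
    (hpos : ∀ t ∈ interior s, 0 ≤ f (u t)) : MonotoneOn u s := by
  refine monotoneOn_of_deriv_nonneg hconv (ode_contOn hu hs) ?_ ?_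
  · exact fun t ht =>
      ((hu t (hs (interior_subset ht))).differentiableAt).differentiableWithinAt
  · intro t ht
    rw [(hu t (hs (interior_subset ht))).deriv]
    exact hpos t ht

private lemma ode_strictMonoOn {u f : ℝ → ℝ} (hu : ∀ t ≥ (0:ℝ), HasDerivAt u (f (u t)) t)
    {s : Set ℝ} (hs : s ⊆ Ici 0) (hconv : Convex ℝ s)
    (hpos : ∀ t ∈ interior s, 0 < f (u t)) : StrictMonoOn u s := by
  refine strictMonoOn_of_deriv_pos hconv (ode_contOn hu hs) ?_
  intro t ht
  rw [(hu t (hs (interior_subset ht))).deriv]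
  exact hpos t ht

private lemma ode_strictAntiOn {u f : ℝ → ℝ} (hu : ∀ t ≥ (0:ℝ), HasDerivAt u (f (u t)) t)
    {s : Set ℝ} (hs : s ⊆ Ici 0) (hconv : Convex ℝ s)
    (hneg : ∀ t ∈ interior s, f (u t) < 0) : StrictAntiOn u s := by
  refine strictAntiOn_of_deriv_neg hconv (ode_contOn hu hs) ?_
  intro t ht
  rw [(hu t (hs (interior_subset ht))).deriv]
  exact hneg t ht
/-- Claim 1: upper barrier. -/
private lemma stay_le {u f : ℝ → ℝ} {β : ℝ}
    (hu : ∀ t ≥ (0:ℝ), HasDerivAt u (f (u t)) t)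
    (hfneg : ∀ v, β < v → f v < 0) (h0 : u 0 ≤ β) :
    ∀ t ≥ (0:ℝ), u t ≤ β := by
  intro t₁ ht₁
  by_contra hgt
  push_neg at hgt
  set A : Set ℝ := Icc 0 t₁ ∩ u ⁻¹' Iic β with hA
  have hsub : Icc (0:ℝ) t₁ ⊆ Ici 0 := fun t ht => ht.1
  have hA0 : (0:ℝ) ∈ A := ⟨⟨le_refl 0, ht₁⟩, h0⟩
  have hAne : A.Nonempty := ⟨0, hA0⟩
  have hAbdd : BddAbove A := ⟨t₁, fun t ht => ht.1.2⟩
  have hclosed : IsClosed A :=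
    (ode_contOn hu hsub).preimage_isClosed_of_isClosed isClosed_Icc isClosed_Iic
  set t₀ := sSup A with ht₀def
  have ht₀A : t₀ ∈ A := hclosed.csSup_mem hAne hAbdd
  have ht₀0 : 0 ≤ t₀ := ht₀A.1.1
  have ht₀le : t₀ ≤ t₁ := ht₀A.1.2
  have ht₀ne : t₀ ≠ t₁ := by
    intro h; exact absurd ht₀A.2 (by simpa [h] using hgt.not_ge)
  have ht₀lt : t₀ < t₁ := lt_of_le_of_ne ht₀le ht₀ne
  have habove : ∀ t ∈ Ioc t₀ t₁, β < u t := by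
    intro t ht
    by_contra hle
    push_neg at hle
    have : t ∈ A := ⟨⟨le_trans ht₀0 ht.1.le, ht.2⟩, hle⟩
    exact absurd (le_csSup hAbdd this) (not_le.mpr ht.1)
  have hut₀ : u t₀ = β := by
    refine le_antisymm ht₀A.2 ?_
    have htend : Tendsto u (𝓝[>] t₀) (𝓝 (u t₀)) :=
      ((hu t₀ ht₀0).continuousAt).continuousWithinAt.mono (fun _ _ => trivial)
    have hev : ∀ᶠ t in 𝓝[>] t₀, β ≤ u t := by
      filter_upwards [Ioc_mem_nhdsGT_of_mem ⟨le_refl t₀, ht₀lt⟩] with t ht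
      exact (habove t ht).le
    exact ge_of_tendsto htend hev
  have hanti : StrictAntiOn u (Icc t₀ t₁) := by
    refine ode_strictAntiOn hu (fun t ht => le_trans ht₀0 ht.1) (convex_Icc _ _) ?_
    intro t ht
    rw [interior_Icc] at ht
    exact hfneg _ (habove t ⟨ht.1, ht.2.le⟩)
  have := hanti (left_mem_Icc.mpr ht₀le) (right_mem_Icc.mpr ht₀le) ht₀lt
  rw [hut₀] at this
  exact absurd (habove t₁ ⟨ht₀lt, le_refl _⟩) (not_lt.mpr this.le)
/-- Claim 2: strict lower barrier, assuming global upper bound. -/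
private lemma stay_gt {u f : ℝ → ℝ} {α β : ℝ}
    (hu : ∀ t ≥ (0:ℝ), HasDerivAt u (f (u t)) t)
    (hub : ∀ t ≥ (0:ℝ), u t ≤ β)
    (hf0 : ∀ v, α < v → v ≤ β → 0 ≤ f v) (h0 : α < u 0) :
    ∀ t ≥ (0:ℝ), α < u t := by
  intro t₁ ht₁
  by_contra hle
  push_neg at hle
  set A : Set ℝ := Icc 0 t₁ ∩ u ⁻¹' Iic α with hA
  have hsub : Icc (0:ℝ) t₁ ⊆ Ici 0 := fun t ht => ht.1
  have hAt₁ : t₁ ∈ A := ⟨⟨ht₁, le_refl _⟩, hle⟩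
  have hAne : A.Nonempty := ⟨t₁, hAt₁⟩
  have hAbdd : BddBelow A := ⟨0, fun t ht => ht.1.1⟩
  have hclosed : IsClosed A :=
    (ode_contOn hu hsub).preimage_isClosed_of_isClosed isClosed_Icc isClosed_Iic
  set t₀ := sInf A with ht₀def
  have ht₀A : t₀ ∈ A := hclosed.csInf_mem hAne hAbdd
  have ht₀0 : 0 ≤ t₀ := ht₀A.1.1
  have hbelow : ∀ t ∈ Ico 0 t₀, α < u t := by
    intro t ht
    by_contra h
    push_neg at h
    have : t ∈ A := ⟨⟨ht.1, le_trans ht.2.le ht₀A.1.2⟩, h⟩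
    exact absurd (csInf_le hAbdd this) (not_le.mpr ht.2)
  have hmono : MonotoneOn u (Icc 0 t₀) := by
    refine ode_monoOn hu (fun t ht => ht.1) (convex_Icc _ _) ?_
    intro t ht
    rw [interior_Icc] at ht
    exact hf0 _ (hbelow t ⟨ht.1.le, ht.2⟩) (hub t ht.1.le)
  have := hmono (left_mem_Icc.mpr ht₀0) (right_mem_Icc.mpr ht₀0) ht₀0
  exact absurd (lt_of_lt_of_le h0 this) (not_lt.mpr ht₀A.2)

/-- Claim 3: lower barrier at β. -/
private lemma stay_ge {u f : ℝ → ℝ} {α β : ℝ}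
    (hu : ∀ t ≥ (0:ℝ), HasDerivAt u (f (u t)) t) (hαβ : α < β)
    (hfpos : ∀ v, α < v → v ≤ β → 0 ≤ f v) (h0 : β ≤ u 0) :
    ∀ t ≥ (0:ℝ), β ≤ u t := by
  intro t₁ ht₁
  by_contra hlt
  push_neg at hlt
  set A : Set ℝ := Icc 0 t₁ ∩ u ⁻¹' Ici β with hA
  have hsub : Icc (0:ℝ) t₁ ⊆ Ici 0 := fun t ht => ht.1
  have hA0 : (0:ℝ) ∈ A := ⟨⟨le_refl 0, ht₁⟩, h0⟩
  have hAne : A.Nonempty := ⟨0, hA0⟩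
  have hAbdd : BddAbove A := ⟨t₁, fun t ht => ht.1.2⟩
  have hclosed : IsClosed A :=
    (ode_contOn hu hsub).preimage_isClosed_of_isClosed isClosed_Icc isClosed_Ici
  set t₀ := sSup A with ht₀def
  have ht₀A : t₀ ∈ A := hclosed.csSup_mem hAne hAbdd
  have ht₀0 : 0 ≤ t₀ := ht₀A.1.1
  have ht₀le : t₀ ≤ t₁ := ht₀A.1.2
  have ht₀ne : t₀ ≠ t₁ := by
    intro h; rw [h] at ht₀A; exact absurd ht₀A.2 (not_le.mpr hlt)
  have ht₀lt : t₀ < t₁ := lt_of_le_of_ne ht₀le ht₀ne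
  have hbelowβ : ∀ t ∈ Ioc t₀ t₁, u t < β := by
    intro t ht
    by_contra h
    push_neg at h
    have : t ∈ A := ⟨⟨le_trans ht₀0 ht.1.le, ht.2⟩, h⟩
    exact absurd (le_csSup hAbdd this) (not_le.mpr ht.1)
  have hut₀ : u t₀ = β := by
    refine le_antisymm ?_ ht₀A.2
    have htend : Tendsto u (𝓝[>] t₀) (𝓝 (u t₀)) :=
      ((hu t₀ ht₀0).continuousAt).continuousWithinAt.mono (fun _ _ => trivial)
    have hev : ∀ᶠ t in 𝓝[>] t₀, u t ≤ β := by
      filter_upwards [Ioc_mem_nhdsGT_of_mem ⟨le_refl t₀, ht₀lt⟩] with t ht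
      exact (hbelowβ t ht).le
    exact le_of_tendsto htend hev
  -- does u go ≤ α somewhere on (t₀, t₁]?
  by_cases hcase : ∃ s ∈ Ioc t₀ t₁, u s ≤ α
  · obtain ⟨s, hs, hsα⟩ := hcase
    set B : Set ℝ := Icc t₀ t₁ ∩ u ⁻¹' Iic α with hB
    have hBs : s ∈ B := ⟨⟨hs.1.le, hs.2⟩, hsα⟩
    have hBne : B.Nonempty := ⟨s, hBs⟩
    have hBbdd : BddBelow B := ⟨t₀, fun t ht => ht.1.1⟩
    have hBclosed : IsClosed B :=
      (ode_contOn hu (fun t ht => le_trans ht₀0 ht.1)).preimage_isClosed_of_isClosed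
        isClosed_Icc isClosed_Iic
    set s₀ := sInf B with hs₀def
    have hs₀B : s₀ ∈ B := hBclosed.csInf_mem hBne hBbdd
    have hs₀ge : t₀ ≤ s₀ := hs₀B.1.1
    have hs₀gtα : ∀ t ∈ Ico t₀ s₀, α < u t := by
      intro t ht
      by_contra h
      push_neg at h
      have : t ∈ B := ⟨⟨ht.1, le_trans ht.2.le hs₀B.1.2⟩, h⟩
      exact absurd (csInf_le hBbdd this) (not_le.mpr ht.2)
    have hmono : MonotoneOn u (Icc t₀ s₀) := by
      refine ode_monoOn hu (fun t ht => le_trans ht₀0 ht.1) (convex_Icc _ _) ?_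
      intro t ht
      rw [interior_Icc] at ht
      exact hfpos _ (hs₀gtα t ⟨ht.1.le, ht.2⟩)
        (hbelowβ t ⟨ht.1, le_trans ht.2.le hs₀B.1.2⟩).le
    have := hmono (left_mem_Icc.mpr hs₀ge) (right_mem_Icc.mpr hs₀ge) hs₀ge
    rw [hut₀] at this
    exact absurd (le_trans this hs₀B.2) (not_le.mpr hαβ)
  · push_neg at hcase
    have hmono : MonotoneOn u (Icc t₀ t₁) := by
      refine ode_monoOn hu (fun t ht => le_trans ht₀0 ht.1) (convex_Icc _ _) ?_
      intro t ht
      rw [interior_Icc] at ht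
      exact hfpos _ (hcase t ⟨ht.1, ht.2.le⟩) (hbelowβ t ⟨ht.1, ht.2.le⟩).le
    have := hmono (left_mem_Icc.mpr ht₀le) (right_mem_Icc.mpr ht₀le) ht₀le
    rw [hut₀] at this
    exact absurd this (not_le.mpr hlt)
/-- Convergence from below to β. -/
private lemma tendsto_up {u f : ℝ → ℝ} {α β : ℝ}
    (hu : ∀ t ≥ (0:ℝ), HasDerivAt u (f (u t)) t) (hf : Continuous f)
    (hmem : ∀ t ≥ (0:ℝ), α < u t ∧ u t ≤ β)
    (hfpos : ∀ v, α < v → v < β → 0 < f v)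
    (hf0 : ∀ v, α < v → v ≤ β → 0 ≤ f v) :
    Tendsto u atTop (𝓝 β) := by
  have hmono : MonotoneOn u (Ici 0) := by
    refine ode_monoOn hu (le_refl _) (convex_Ici _) ?_
    intro t ht
    rw [interior_Ici] at ht
    exact hf0 _ (hmem t ht.le).1 (hmem t ht.le).2
  set v : ℝ → ℝ := fun t => u (max t 0) with hv
  have hvmono : Monotone v := fun s t hst =>
    hmono (le_max_right s 0) (le_max_right t 0) (max_le_max hst (le_refl 0))
  have hvbdd : BddAbove (range v) := by
    refine ⟨β, ?_⟩
    rintro _ ⟨t, rfl⟩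
    exact (hmem _ (le_max_right t 0)).2
  have hvt : Tendsto v atTop (𝓝 (⨆ t, v t)) := tendsto_atTop_ciSup hvmono hvbdd
  set L := ⨆ t, v t with hL
  have heq : v =ᶠ[atTop] u := by
    filter_upwards [eventually_ge_atTop (0:ℝ)] with t ht
    simp [hv, max_eq_left ht]
  have hut : Tendsto u atTop (𝓝 L) := hvt.congr' heq
  have hLβ : L ≤ β := ciSup_le fun t => (hmem _ (le_max_right t 0)).2
  have hv0 : v 0 = u 0 := by simp [hv]
  have hu0L : u 0 ≤ L := hv0 ▸ le_ciSup hvbdd 0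
  have hLle : ∀ t ≥ (0:ℝ), u t ≤ L := by
    intro t ht
    have h := le_ciSup hvbdd t
    simpa [hv, max_eq_left ht] using h
  have hLeq : L = β := by
    by_contra hne
    have hLlt : L < β := lt_of_le_of_ne hLβ hne
    have hne' : (Icc (u 0) L).Nonempty := ⟨u 0, le_refl _, hu0L⟩
    obtain ⟨v₀, hv₀, hminOn⟩ := isCompact_Icc.exists_isMinOn hne' hf.continuousOn
    set c := f v₀ with hc
    have hcpos : 0 < c :=
      hfpos v₀ (lt_of_lt_of_le (hmem 0 (le_refl _)).1 hv₀.1) (lt_of_le_of_lt hv₀.2 hLlt)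
    have hmin : ∀ w ∈ Icc (u 0) L, c ≤ f w := fun w hw => hminOn hw
    set w : ℝ → ℝ := fun t => u t - c * t with hw
    have hwD : ∀ t ≥ (0:ℝ), HasDerivAt w (f (u t) - c) t := by
      intro t ht
      have h2 : HasDerivAt (fun s : ℝ => c * s) c t := by
        simpa using (hasDerivAt_id t).const_mul c
      exact (hu t ht).sub h2
    have hwmono : MonotoneOn w (Ici 0) := by
      refine monotoneOn_of_deriv_nonneg (convex_Ici _) ?_ ?_ ?_
      · exact fun t ht => ((hwD t ht).continuousAt).continuousWithinAt
      · intro t ht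
        rw [interior_Ici] at ht
        exact ((hwD t ht.le).differentiableAt).differentiableWithinAt
      · intro t ht
        rw [interior_Ici] at ht
        rw [(hwD t ht.le).deriv]
        have hmemt : u t ∈ Icc (u 0) L :=
          ⟨hmono (le_refl (0:ℝ)) (mem_Ici.mpr ht.le) ht.le, hLle t ht.le⟩
        linarith [hmin _ hmemt]
    obtain ⟨T, hT0, hTgt⟩ : ∃ T, 0 ≤ T ∧ L < u 0 + c * T := by
      refine ⟨(L - u 0) / c + 1, ?_, ?_⟩
      · have h := div_nonneg (sub_nonneg.mpr hu0L) hcpos.le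
        linarith
      · have h : c * ((L - u 0) / c + 1) = (L - u 0) + c := by
          field_simp
        rw [h]; linarith
    have h1 : w 0 ≤ w T := hwmono (le_refl (0:ℝ)) hT0 hT0
    have h2 : u T ≤ L := hLle T hT0
    simp only [hw] at h1
    nlinarith
  rw [← hLeq]
  exact hut

/-- every trajectory starting with x²+y² > a - γ₀ converges to the
limit cycle x²+y² = a + γ₀. -/
theorem stmt_6 (a b ω σ : ℝ) (ha : 0 < a) (hb : 0 < b) (hω : 0 < ω)
    (hσ1 : -a ^ 2 * b < σ) (hσ2 : σ < 0)
    (x y : ℝ → ℝ)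
    (hx : ∀ t ≥ (0 : ℝ), HasDerivAt x
      (-ω * y t + x t * (σ + 2 * a * b * (x t ^ 2 + y t ^ 2) - b * (x t ^ 2 + y t ^ 2) ^ 2)) t)
    (hy : ∀ t ≥ (0 : ℝ), HasDerivAt y
      (ω * x t + y t * (σ + 2 * a * b * (x t ^ 2 + y t ^ 2) - b * (x t ^ 2 + y t ^ 2) ^ 2)) t)
    (h0 : a - Real.sqrt (a ^ 2 + σ / b) < x 0 ^ 2 + y 0 ^ 2) :
    Filter.Tendsto (fun t => x t ^ 2 + y t ^ 2) Filter.atTop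
      (nhds (a + Real.sqrt (a ^ 2 + σ / b))) := by
  set γ := Real.sqrt (a ^ 2 + σ / b) with hγdef
  set f : ℝ → ℝ := fun v => 2 * v * (σ + 2 * a * b * v - b * v ^ 2) with hfdef
  set u : ℝ → ℝ := fun t => x t ^ 2 + y t ^ 2 with hudef
  have hu : ∀ t ≥ (0:ℝ), HasDerivAt u (f (u t)) t := by
    intro t ht
    have h1 := ((hx t ht).pow 2).add ((hy t ht).pow 2)
    have h2 : ((2:ℕ):ℝ) * x t ^ (2-1) * (-ω * y t + x t * (σ + 2 * a * b * (x t ^ 2 + y t ^ 2)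
          - b * (x t ^ 2 + y t ^ 2) ^ 2))
        + ((2:ℕ):ℝ) * y t ^ (2-1) * (ω * x t + y t * (σ + 2 * a * b * (x t ^ 2 + y t ^ 2)
          - b * (x t ^ 2 + y t ^ 2) ^ 2)) = f (u t) := by
      simp only [hfdef, hudef]
      push_cast
      ring
    rw [h2] at h1
    exact h1
  have hposq : 0 < a ^ 2 + σ / b := by
    have h : -a ^ 2 < σ / b := by
      rw [lt_div_iff₀ hb]; linarith
    linarith
  have hγpos : 0 < γ := Real.sqrt_pos.mpr hposq
  have hγsq : γ ^ 2 = a ^ 2 + σ / b := Real.sq_sqrt hposq.le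
  have hγa : γ < a := by
    have h1 : γ ^ 2 < a ^ 2 := by
      have : σ / b < 0 := div_neg_of_neg_of_pos hσ2 hb
      rw [hγsq]; linarith
    nlinarith
  have hb' : b * γ ^ 2 = b * a ^ 2 + σ := by
    rw [hγsq]; field_simp
  have hfac : ∀ v, f v = -2 * b * v * (v - (a - γ)) * (v - (a + γ)) := by
    intro v
    simp only [hfdef]
    linear_combination (-2 * v) * hb'
  have hfcont : Continuous f := by
    simp only [hfdef]; fun_prop
  have hαpos : 0 < a - γ := by linarith
  have hfneg : ∀ v, a + γ < v → f v < 0 := by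
    intro v hv
    rw [hfac]
    have h1 : 0 < v := by linarith
    have h2 : 0 < v - (a - γ) := by linarith
    have h3 : 0 < v - (a + γ) := by linarith
    nlinarith [mul_pos (mul_pos h1 h2) h3]
  have hfnonpos : ∀ v, a + γ ≤ v → f v ≤ 0 := by
    intro v hv
    rw [hfac]
    have h1 : 0 < v := by linarith
    have h2 : 0 < v - (a - γ) := by linarith
    have h3 : 0 ≤ v - (a + γ) := by linarith
    nlinarith [mul_nonneg (mul_pos h1 h2).le h3]
  have hf0 : ∀ v, a - γ < v → v ≤ a + γ → 0 ≤ f v := by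
    intro v hv1 hv2
    rw [hfac]
    have h1 : 0 < v := by linarith
    have h2 : 0 < v - (a - γ) := by linarith
    have h3 : 0 ≤ (a + γ) - v := by linarith
    nlinarith [mul_nonneg (mul_pos h1 h2).le h3]
  have hfpos : ∀ v, a - γ < v → v < a + γ → 0 < f v := by
    intro v hv1 hv2
    rw [hfac]
    have h1 : 0 < v := by linarith
    have h2 : 0 < v - (a - γ) := by linarith
    have h3 : 0 < (a + γ) - v := by linarith
    nlinarith [mul_pos (mul_pos h1 h2) h3]
  have h0' : a - γ < u 0 := h0
  rcases le_or_gt (u 0) (a + γ) with hc | hc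
  · -- starts at or below the limit cycle
    have hub := stay_le hu hfneg hc
    have hlb := stay_gt hu hub hf0 h0'
    exact tendsto_up hu hfcont (fun t ht => ⟨hlb t ht, hub t ht⟩) hfpos hf0
  · -- starts above the limit cycle
    have hge := stay_ge hu (by linarith : a - γ < a + γ) hf0 hc.le
    have hanti : AntitoneOn u (Ici 0) := by
      refine antitoneOn_of_deriv_nonpos (convex_Ici _) ?_ ?_ ?_
      · exact fun t ht => ((hu t ht).continuousAt).continuousWithinAt
      · intro t ht
        rw [interior_Ici] at ht
        exact ((hu t ht.le).differentiableAt).differentiableWithinAt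
      · intro t ht
        rw [interior_Ici] at ht
        rw [(hu t ht.le).deriv]
        exact hfnonpos _ (hge t ht.le)
    have hub : ∀ t ≥ (0:ℝ), u t ≤ u 0 := fun t ht => hanti (le_refl (0:ℝ)) ht ht
    -- reflect: apply tendsto_up to -u
    set g : ℝ → ℝ := fun v => -(f (-v)) with hgdef
    have hgu : ∀ t ≥ (0:ℝ), HasDerivAt (fun s => -(u s)) (g (-(u t))) t := by
      intro t ht
      have := (hu t ht).neg
      simp only [hgdef, neg_neg]; exact this
    have hgcont : Continuous g := by
      simp only [hgdef]
      exact (hfcont.comp continuous_neg).neg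
    have hmem : ∀ t ≥ (0:ℝ), -(u 0) - 1 < -(u t) ∧ -(u t) ≤ -(a + γ) := by
      intro t ht
      constructor
      · have := hub t ht; linarith
      · have := hge t ht; linarith
    have hgpos : ∀ v, -(u 0) - 1 < v → v < -(a + γ) → 0 < g v := by
      intro v h1 h2
      have := hfneg (-v) (by linarith)
      simp only [hgdef]
      linarith
    have hg0 : ∀ v, -(u 0) - 1 < v → v ≤ -(a + γ) → 0 ≤ g v := by
      intro v h1 h2
      have := hfnonpos (-v) (by linarith)
      simp only [hgdef]
      linarith
    have hres : Tendsto (fun t => -(u t)) atTop (𝓝 (-(a + γ))) :=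
      tendsto_up hgu hgcont hmem hgpos hg0
    have := hres.neg
    simpa using this
end

section
/- Let a, b, ω > 0 and −a²b < σ < 0, and set γ₀ = √(a² + σ/b). Let φ = (x, y) : [0, ∞) → ℝ² be a solution of the bistable oscillator and put h(t) = x(t)² + y(t)². Then: (i) if a − γ₀ < h(0) ≤ a + γ₀, then a − γ₀ < h(t) ≤ a + γ₀ for all t ≥ 0; and (ii) if h(0) ≥ a + γ₀, then h(t) ≥ a + γ₀ for all t ≥ 0. In other words, both the annulus {a − γ₀ < x² + y² ≤ a + γ₀} and the exterior region {x² + y² ≥ a + γ₀} are forward invariant. -/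
open Set

/-- Grönwall zero-propagation, forward in time: a solution of a linear scalar ODE
`u' = L t * u` on `[p, q]` that vanishes at `p` vanishes at `q`. -/
lemma gron_zero_fwd {u L : ℝ → ℝ} {p q : ℝ} (hpq : p ≤ q)
    (hu : ∀ r ∈ Icc p q, HasDerivAt u (L r * u r) r)
    (hLc : ContinuousOn L (Icc p q))
    (hup : u p = 0) : u q = 0 := by
  obtain ⟨K, hK⟩ := isCompact_Icc.exists_bound_of_continuousOn hLc
  have hcont : ContinuousOn u (Icc p q) := fun r hr =>
    (hu r hr).continuousAt.continuousWithinAt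
  have key : ∀ r ∈ Icc p q, ‖u r‖ ≤ gronwallBound 0 K 0 (r - p) := by
    apply norm_le_gronwallBound_of_norm_deriv_right_le hcont
    · intro r hr
      exact (hu r ⟨hr.1, hr.2.le⟩).hasDerivWithinAt
    · simp [hup]
    · intro r hr
      have h1 : ‖L r‖ ≤ K := hK r ⟨hr.1, hr.2.le⟩
      calc ‖L r * u r‖ = ‖L r‖ * ‖u r‖ := norm_mul _ _
        _ ≤ K * ‖u r‖ + 0 := by
            nlinarith [norm_nonneg (u r), norm_nonneg (L r)]
  have h0 : ‖u q‖ ≤ 0 := by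
    simpa [gronwallBound_ε0_δ0] using key q ⟨hpq, le_refl q⟩
  exact norm_eq_zero.mp (le_antisymm h0 (norm_nonneg _))

/-- Grönwall zero-propagation, backward in time. -/
lemma gron_zero_bwd {u L : ℝ → ℝ} {p q : ℝ} (hpq : p ≤ q)
    (hu : ∀ r ∈ Icc p q, HasDerivAt u (L r * u r) r)
    (hLc : ContinuousOn L (Icc p q))
    (huq : u q = 0) : u p = 0 := by
  have hmaps : ∀ r ∈ Icc p q, p + q - r ∈ Icc p q := by
    intro r hr; exact ⟨by linarith [hr.2], by linarith [hr.1]⟩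
  have key : (fun r => u (p + q - r)) q = 0 := by
    apply gron_zero_fwd (u := fun r => u (p + q - r)) (L := fun r => -L (p + q - r)) hpq
    · intro r hr
      have hinner : HasDerivAt (fun s : ℝ => p + q - s) (-1) r := by
        simpa using (hasDerivAt_id r).const_sub (p + q)
      have := (hu (p + q - r) (hmaps r hr)).comp r hinner
      refine this.congr_deriv (Eq.symm ?_)
      beta_reduce
      ring
    · have : Continuous (fun r : ℝ => p + q - r) := by continuity
      exact (hLc.comp this.continuousOn hmaps).neg
    · simpa using huq
  simpa using key

/-- If `u` solves a linear ODE `u' = L·u` on `[0, ∞)` with continuous coefficient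
and vanishes at some point, it vanishes at every point of `[0, ∞)`. -/
lemma zero_forever {u L : ℝ → ℝ}
    (hu : ∀ t ≥ (0:ℝ), HasDerivAt u (L t * u t) t)
    (hLc : ContinuousOn L (Ici 0))
    {s t : ℝ} (hs : 0 ≤ s) (ht : 0 ≤ t) (hus : u s = 0) : u t = 0 := by
  rcases le_total s t with hst | hts
  · exact gron_zero_fwd hst (fun r hr => hu r (hs.trans hr.1))
      (hLc.mono (fun r hr => hs.trans hr.1)) hus
  · exact gron_zero_bwd hts (fun r hr => hu r (ht.trans hr.1))
      (hLc.mono (fun r hr => ht.trans hr.1)) hus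

/-- forward invariance of the annulus {a-γ₀ < x²+y² ≤ a+γ₀} and the
exterior region {x²+y² ≥ a+γ₀}. -/
theorem stmt_7 (a b ω σ : ℝ) (ha : 0 < a) (hb : 0 < b) (hω : 0 < ω)
    (hσ1 : -a ^ 2 * b < σ) (hσ2 : σ < 0)
    (x y : ℝ → ℝ)
    (hx : ∀ t ≥ (0 : ℝ), HasDerivAt x
      (-ω * y t + x t * (σ + 2 * a * b * (x t ^ 2 + y t ^ 2) - b * (x t ^ 2 + y t ^ 2) ^ 2)) t)
    (hy : ∀ t ≥ (0 : ℝ), HasDerivAt y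
      (ω * x t + y t * (σ + 2 * a * b * (x t ^ 2 + y t ^ 2) - b * (x t ^ 2 + y t ^ 2) ^ 2)) t) :
    let γ := Real.sqrt (a ^ 2 + σ / b)
    let h : ℝ → ℝ := fun t => x t ^ 2 + y t ^ 2
    ((a - γ < h 0 ∧ h 0 ≤ a + γ) → ∀ t ≥ (0 : ℝ), a - γ < h t ∧ h t ≤ a + γ) ∧
    (a + γ ≤ h 0 → ∀ t ≥ (0 : ℝ), a + γ ≤ h t) := by
  intro γ h
  -- γ² relation
  have hb' : b ≠ 0 := ne_of_gt hb
  have hnn : (0:ℝ) ≤ a ^ 2 + σ / b := by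
    have : -a ^ 2 < σ / b := by
      rw [lt_div_iff₀ hb]; linarith
    linarith
  have hγ2 : b * γ ^ 2 = a ^ 2 * b + σ := by
    have : γ ^ 2 = a ^ 2 + σ / b := Real.sq_sqrt hnn
    rw [this]; field_simp
  -- derivative of h
  have hh : ∀ t ≥ (0:ℝ), HasDerivAt h
      (2 * h t * (σ + 2 * a * b * h t - b * (h t) ^ 2)) t := by
    intro t ht
    have hx' := hx t ht
    have hy' := hy t ht
    have d1 : HasDerivAt (fun s => x s ^ 2)
        (2 * x t * (-ω * y t + x t * (σ + 2 * a * b * (x t ^ 2 + y t ^ 2)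
          - b * (x t ^ 2 + y t ^ 2) ^ 2))) t := by
      exact (hx'.pow 2).congr_deriv (by push_cast; ring)
    have d2 : HasDerivAt (fun s => y s ^ 2)
        (2 * y t * (ω * x t + y t * (σ + 2 * a * b * (x t ^ 2 + y t ^ 2)
          - b * (x t ^ 2 + y t ^ 2) ^ 2))) t := by
      exact (hy'.pow 2).congr_deriv (by push_cast; ring)
    have := d1.add d2
    refine this.congr_deriv (Eq.symm ?_)
    show 2 * (x t ^ 2 + y t ^ 2) * _ = _
    ring
  -- continuity of h on [0,∞)
  have hhc : ContinuousOn h (Ici 0) := fun t ht =>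
    (hh t ht).continuousAt.continuousWithinAt
  -- For each root c (with conjugate root c'), u = h - c solves u' = L u
  have factored : ∀ c c' : ℝ, c + c' = 2 * a → b * (c * c') = -σ →
      (∀ t ≥ (0:ℝ), HasDerivAt (fun s => h s - c)
        ((-2 * b * h t * (h t - c')) * (h t - c)) t) := by
    intro c c' hsum hprod t ht
    have := (hh t ht).sub_const c
    refine this.congr_deriv (Eq.symm ?_)
    have expand : -2 * b * h t * (h t - c') * (h t - c)
        = -2 * b * h t * (h t ^ 2 - (c + c') * h t + c * c') := by ring
    rw [expand, hsum]
    linear_combination (-2 * h t) * hprod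
  -- continuity of the coefficient
  have hLcont : ∀ c' : ℝ, ContinuousOn (fun t => -2 * b * h t * (h t - c')) (Ici 0) := by
    intro c'
    exact ((continuousOn_const.mul hhc).mul (hhc.sub continuousOn_const))
  -- root data
  have hroot1 : (a + γ) + (a - γ) = 2 * a := by ring
  have hroot2 : b * ((a + γ) * (a - γ)) = -σ := by
    have : (a + γ) * (a - γ) = a ^ 2 - γ ^ 2 := by ring
    rw [this]; nlinarith [hγ2]
  have hroot1' : (a - γ) + (a + γ) = 2 * a := by ring
  have hroot2' : b * ((a - γ) * (a + γ)) = -σ := by rw [mul_comm (a-γ)]; exact hroot2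
  -- zero propagation for u = h - (a+γ) and v = h - (a-γ)
  have zeroP : ∀ {s t : ℝ}, 0 ≤ s → 0 ≤ t → h s = a + γ → h t = a + γ := by
    intro s t hs ht hhs
    have := zero_forever (u := fun r => h r - (a + γ))
      (L := fun r => -2 * b * h r * (h r - (a - γ)))
      (factored _ _ hroot1 hroot2) (hLcont _) hs ht
      (show h s - (a + γ) = 0 by rw [hhs]; ring)
    have h2 : h t - (a + γ) = 0 := this
    linarith
  have zeroM : ∀ {s t : ℝ}, 0 ≤ s → 0 ≤ t → h s = a - γ → h t = a - γ := by
    intro s t hs ht hhs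
    have := zero_forever (u := fun r => h r - (a - γ))
      (L := fun r => -2 * b * h r * (h r - (a + γ)))
      (factored _ _ hroot1' hroot2') (hLcont _) hs ht
      (show h s - (a - γ) = 0 by rw [hhs]; ring)
    have h2 : h t - (a - γ) = 0 := this
    linarith
  constructor
  · rintro ⟨h0lo, h0hi⟩ t ht
    constructor
    · -- a - γ < h t
      by_contra hcon
      push_neg at hcon
      -- there is s ∈ [0, t] with h s = a - γ
      have hccc : ContinuousOn h (Icc 0 t) := hhc.mono (fun r hr => hr.1)
      have : a - γ ∈ Icc (h t) (h 0) := ⟨hcon, by linarith⟩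
      obtain ⟨s, hs, hhs⟩ := intermediate_value_Icc' ht hccc this
      have := zeroM hs.1 (le_refl (0:ℝ)) hhs
      linarith
    · -- h t ≤ a + γ
      by_contra hcon
      push_neg at hcon
      have hccc : ContinuousOn h (Icc 0 t) := hhc.mono (fun r hr => hr.1)
      have : a + γ ∈ Icc (h 0) (h t) := ⟨h0hi, hcon.le⟩
      obtain ⟨s, hs, hhs⟩ := intermediate_value_Icc ht hccc this
      have := zeroP hs.1 ht hhs
      linarith
  · intro h0ge t ht
    by_contra hcon
    push_neg at hcon
    have hccc : ContinuousOn h (Icc 0 t) := hhc.mono (fun r hr => hr.1)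
    have : a + γ ∈ Icc (h t) (h 0) := ⟨hcon.le, h0ge⟩
    obtain ⟨s, hs, hhs⟩ := intermediate_value_Icc' ht hccc this
    have := zeroP hs.1 ht hhs
    linarith
end

section
/- Let a, b, ω > 0 and σ ≥ 0, and set γ₀ = √(a² + σ/b). If φ = (x, y) : [0, ∞) → ℝ² is a solution of the bistable oscillator with (x(0), y(0)) ≠ (0, 0), then x(t)² + y(t)² → a + γ₀ as t → ∞; i.e., the origin is unstable and every nonzero trajectory converges to the limit cycle 𝒞₁ = {(x,y) : x² + y² = a + γ₀}. -/
open Filter Real Set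

/-- Lower barrier lemma: if the derivative is nonnegative whenever `u ≤ m`,
then `u` stays above `m`. -/
lemma aux_barrier_lower (u u' : ℝ → ℝ)
    (hu : ∀ t ≥ (0:ℝ), HasDerivAt u (u' t) t)
    (m : ℝ) (hm0 : m ≤ u 0)
    (hd : ∀ t ≥ (0:ℝ), u t ≤ m → 0 ≤ u' t) :
    ∀ t ≥ (0:ℝ), m ≤ u t := by
  intro t₁ ht₁
  by_contra hcon
  push_neg at hcon
  have hcont : ContinuousOn u (Set.Icc 0 t₁) := fun s hs =>
    (hu s hs.1).continuousAt.continuousWithinAt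
  set S := Set.Icc (0:ℝ) t₁ ∩ u ⁻¹' Set.Ici m with hS
  have hSne : S.Nonempty := ⟨0, ⟨le_refl 0, ht₁⟩, hm0⟩
  have hScl : IsClosed S :=
    hcont.preimage_isClosed_of_isClosed isClosed_Icc isClosed_Ici
  have hScomp : IsCompact S :=
    isCompact_Icc.of_isClosed_subset hScl (fun t ht => ht.1)
  have hτmem : sSup S ∈ S := hScomp.sSup_mem hSne
  set τ := sSup S with hτ
  obtain ⟨⟨hτ0, hτt₁⟩, hτm⟩ := hτmem
  rw [Set.mem_preimage, Set.mem_Ici] at hτm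
  have hlt : ∀ t, τ < t → t ≤ t₁ → u t < m := by
    intro t ht ht'
    by_contra h
    push_neg at h
    have htS : t ∈ S := ⟨⟨le_trans hτ0 ht.le, ht'⟩, h⟩
    exact absurd (le_csSup hScomp.bddAbove htS) (not_le.2 ht)
  have hmono : MonotoneOn u (Set.Icc τ t₁) := by
    apply monotoneOn_of_deriv_nonneg (convex_Icc _ _)
    · exact hcont.mono (Set.Icc_subset_Icc hτ0 le_rfl)
    · intro s hs
      rw [interior_Icc] at hs
      exact ((hu s (le_trans hτ0 hs.1.le)).differentiableAt.differentiableWithinAt)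
    · intro s hs
      rw [interior_Icc] at hs
      have hs0 : (0:ℝ) ≤ s := le_trans hτ0 hs.1.le
      rw [(hu s hs0).deriv]
      exact hd s hs0 (hlt s hs.1 hs.2.le).le
  have := hmono (Set.mem_Icc.2 ⟨le_rfl, hτt₁⟩) (Set.mem_Icc.2 ⟨hτt₁, le_rfl⟩) hτt₁
  linarith

/-- Exponential decay: a nonnegative function with `V' ≤ -c V` tends to zero. -/
lemma aux_decay (V V' : ℝ → ℝ)
    (hV : ∀ t ≥ (0:ℝ), HasDerivAt V (V' t) t)
    (c : ℝ) (hc : 0 < c)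
    (hnn : ∀ t ≥ (0:ℝ), 0 ≤ V t)
    (hd : ∀ t ≥ (0:ℝ), V' t ≤ -c * V t) :
    Filter.Tendsto V Filter.atTop (nhds 0) := by
  have hW : ∀ s ≥ (0:ℝ), HasDerivAt (fun r => V r * Real.exp (c * r))
      (V' s * Real.exp (c * s) + V s * (Real.exp (c * s) * c)) s := by
    intro s hs
    have he : HasDerivAt (fun r => Real.exp (c * r)) (Real.exp (c * s) * c) s := by
      have := ((hasDerivAt_id s).const_mul c).exp
      simpa [mul_comm] using this
    exact (hV s hs).mul he
  have hanti : AntitoneOn (fun r => V r * Real.exp (c * r)) (Set.Ici 0) := by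
    apply antitoneOn_of_deriv_nonpos (convex_Ici _)
    · exact fun s hs => (hW s hs).continuousAt.continuousWithinAt
    · intro s hs
      rw [interior_Ici] at hs
      exact (hW s hs.le).differentiableAt.differentiableWithinAt
    · intro s hs
      rw [interior_Ici] at hs
      rw [(hW s hs.le).deriv]
      have h1 := hd s hs.le
      have h2 := Real.exp_pos (c * s)
      nlinarith
  have key : ∀ t ≥ (0:ℝ), V t ≤ V 0 * Real.exp (-(c * t)) := by
    intro t ht
    have h1 : V t * Real.exp (c * t) ≤ V 0 * Real.exp (c * 0) :=
      hanti (Set.mem_Ici.2 le_rfl) (Set.mem_Ici.2 ht) ht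
    rw [mul_zero, Real.exp_zero, mul_one] at h1
    have h2 := Real.exp_pos (c * t)
    have := mul_le_mul_of_nonneg_right h1 (Real.exp_pos (-(c * t))).le
    rwa [mul_assoc, ← Real.exp_add, add_neg_cancel, Real.exp_zero, mul_one] at this
  have hlim : Filter.Tendsto (fun t => V 0 * Real.exp (-(c * t)))
      Filter.atTop (nhds 0) := by
    have h1 : Filter.Tendsto (fun t : ℝ => c * t) Filter.atTop Filter.atTop :=
      Filter.Tendsto.const_mul_atTop hc tendsto_id
    have h2 := Real.tendsto_exp_neg_atTop_nhds_zero.comp h1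
    have := h2.const_mul (V 0)
    simpa using this
  apply tendsto_of_tendsto_of_tendsto_of_le_of_le' tendsto_const_nhds hlim
  · exact Filter.eventually_atTop.2 ⟨0, fun t ht => hnn t ht⟩
  · exact Filter.eventually_atTop.2 ⟨0, fun t ht => key t ht⟩

/-- for σ ≥ 0 every nonzero trajectory converges to the limit cycle
x²+y² = a + γ₀. -/
theorem stmt_8 (a b ω σ : ℝ) (ha : 0 < a) (hb : 0 < b) (hω : 0 < ω)
    (hσ : 0 ≤ σ)
    (x y : ℝ → ℝ)
    (hx : ∀ t ≥ (0 : ℝ), HasDerivAt x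
      (-ω * y t + x t * (σ + 2 * a * b * (x t ^ 2 + y t ^ 2) - b * (x t ^ 2 + y t ^ 2) ^ 2)) t)
    (hy : ∀ t ≥ (0 : ℝ), HasDerivAt y
      (ω * x t + y t * (σ + 2 * a * b * (x t ^ 2 + y t ^ 2) - b * (x t ^ 2 + y t ^ 2) ^ 2)) t)
    (h0 : (x 0, y 0) ≠ ((0 : ℝ), (0 : ℝ))) :
    Filter.Tendsto (fun t => x t ^ 2 + y t ^ 2) Filter.atTop
      (nhds (a + Real.sqrt (a ^ 2 + σ / b))) := by
  set g : ℝ → ℝ := fun s => σ + 2 * a * b * s - b * s ^ 2 with hgdef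
  set γ := Real.sqrt (a ^ 2 + σ / b) with hγdef
  set L := a + γ with hLdef
  have hγsq : γ ^ 2 = a ^ 2 + σ / b := Real.sq_sqrt (by positivity)
  have hγnn : 0 ≤ γ := Real.sqrt_nonneg _
  have hγa : a ≤ γ := by nlinarith [div_nonneg hσ hb.le]
  have hLpos : 0 < L := by simp only [hLdef]; linarith
  have hbσ : b * γ ^ 2 = b * a ^ 2 + σ := by rw [hγsq]; field_simp
  have hgfact : ∀ s : ℝ, g s = -b * (s + γ - a) * (s - L) := by
    intro s
    simp only [hgdef, hLdef]
    linear_combination -hbσ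
  -- the squared radius u
  set u : ℝ → ℝ := fun t => x t ^ 2 + y t ^ 2 with hudef
  have hunn : ∀ t, 0 ≤ u t := fun t => by positivity
  have hu : ∀ t ≥ (0:ℝ), HasDerivAt u (2 * u t * g (u t)) t := by
    intro t ht
    have h1 := ((hx t ht).fun_pow 2).add ((hy t ht).fun_pow 2)
    refine h1.congr_deriv ?_
    simp only [hudef, hgdef]
    ring
  have hu0 : 0 < u 0 := by
    have h : x 0 ≠ 0 ∨ y 0 ≠ 0 := by
      by_contra h
      push_neg at h
      exact h0 (Prod.ext h.1 h.2)
    show (0:ℝ) < x 0 ^ 2 + y 0 ^ 2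
    rcases h with h | h
    · have : 0 < x 0 ^ 2 := by positivity
      nlinarith [sq_nonneg (y 0)]
    · have : 0 < y 0 ^ 2 := by positivity
      nlinarith [sq_nonneg (x 0)]
  set m0 := min (u 0) L with hm0def
  have hm0pos : 0 < m0 := lt_min hu0 hLpos
  have hm0L : m0 ≤ L := min_le_right _ _
  -- lower barrier: u t ≥ m0 for all t ≥ 0
  have hlow : ∀ t ≥ (0:ℝ), m0 ≤ u t := by
    apply aux_barrier_lower u (fun t => 2 * u t * g (u t)) hu m0 (min_le_left _ _)
    intro t ht hle
    have h1 : (0:ℝ) ≤ u t + γ - a := by linarith [hunn t]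
    have h2 : (0:ℝ) ≤ L - u t := by linarith
    rw [hgfact (u t)]
    nlinarith [mul_nonneg (mul_nonneg h1 h2) (hunn t)]
  -- Lyapunov function V = (u - L)^2 with exponential decay
  set c := 4 * b * m0 ^ 2 with hcdef
  have hcpos : 0 < c := by positivity
  have hVd : ∀ t ≥ (0:ℝ), HasDerivAt (fun r => (u r - L) ^ 2)
      (2 * (u t - L) * (2 * u t * g (u t))) t := by
    intro t ht
    have := ((hu t ht).sub_const L).fun_pow 2
    refine this.congr_deriv ?_
    ring
  have hVtend : Filter.Tendsto (fun t => (u t - L) ^ 2) Filter.atTop (nhds 0) := by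
    apply aux_decay _ (fun t => 2 * (u t - L) * (2 * u t * g (u t))) hVd c hcpos
    · intro t _; positivity
    · intro t ht
      have hs := hlow t ht
      rw [hgfact (u t)]
      have hkey : m0 * m0 ≤ u t * (u t + γ - a) :=
        mul_le_mul hs (by linarith) hm0pos.le (by linarith [hunn t])
      nlinarith [mul_le_mul_of_nonneg_left hkey (mul_nonneg hb.le (sq_nonneg (u t - L)))]
  have habs : Filter.Tendsto (fun t => |u t - L|) Filter.atTop (nhds 0) := by
    have h := (Real.continuous_sqrt.tendsto 0).comp hVtend
    simpa [Function.comp_def, Real.sqrt_sq_eq_abs, Real.sqrt_zero] using h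
  have hsub : Filter.Tendsto (fun t => u t - L) Filter.atTop (nhds 0) :=
    (tendsto_zero_iff_abs_tendsto_zero _).2 habs
  have := hsub.add_const L
  simpa [hudef, hLdef] using this
end

section
/- Let a, b, ω > 0, −a²b < σ < 0, μ ∈ (0, 1), and ε ∈ (0, 1), and set γ_μ = √(a² + (1−μ)σ/b) and g(s) = σ + 2ab·s − b·s². Fix (x, y) ∈ ℝ² and (u₁, u₂) ∈ ℝ² such that x² + y² < a − γ_μ and √(x² + y²) ≥ ‖(u₁,u₂)‖ / ((1−ε)μ|σ|). Then the derivative of V = ½(x² + y²) along the forced vector field, namely W := (x² + y²)·g(x² + y²) + x·u₁ + y·u₂, satisfies W ≤ ε·μ·σ·(x² + y²) ≤ 0, with W = 0 only if x² + y² = 0. -/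
/-- pointwise bound on the Lyapunov derivative of the forced system. -/
theorem stmt_11 (a b ω σ μ ε : ℝ) (ha : 0 < a) (hb : 0 < b) (hω : 0 < ω)
    (hσ1 : -a ^ 2 * b < σ) (hσ2 : σ < 0)
    (hμ : μ ∈ Set.Ioo (0 : ℝ) 1) (hε : ε ∈ Set.Ioo (0 : ℝ) 1)
    (x y u1 u2 : ℝ)
    (hxy : x ^ 2 + y ^ 2 < a - Real.sqrt (a ^ 2 + (1 - μ) * σ / b))
    (hlow : Real.sqrt (u1 ^ 2 + u2 ^ 2) / ((1 - ε) * μ * |σ|) ≤ Real.sqrt (x ^ 2 + y ^ 2)) :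
    (x ^ 2 + y ^ 2) * (σ + 2 * a * b * (x ^ 2 + y ^ 2) - b * (x ^ 2 + y ^ 2) ^ 2)
        + x * u1 + y * u2 ≤ ε * μ * σ * (x ^ 2 + y ^ 2) ∧
    ε * μ * σ * (x ^ 2 + y ^ 2) ≤ 0 ∧
    ((x ^ 2 + y ^ 2) * (σ + 2 * a * b * (x ^ 2 + y ^ 2) - b * (x ^ 2 + y ^ 2) ^ 2)
        + x * u1 + y * u2 = 0 → x ^ 2 + y ^ 2 = 0) := by
  obtain ⟨hμ0, hμ1⟩ := hμ
  obtain ⟨hε0, hε1⟩ := hε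
  set s := x ^ 2 + y ^ 2 with hsdef
  have hs : 0 ≤ s := by positivity
  clear_value s
  have habs : |σ| = -σ := abs_of_neg hσ2
  -- the argument of the sqrt is nonneg
  have harg : 0 ≤ a ^ 2 + (1 - μ) * σ / b := by
    have he : a ^ 2 + (1 - μ) * σ / b = (a ^ 2 * b + (1 - μ) * σ) / b := by
      field_simp
    rw [he]
    apply div_nonneg _ hb.le
    nlinarith
  set γ := Real.sqrt (a ^ 2 + (1 - μ) * σ / b) with hγdef
  have hγ0 : 0 ≤ γ := Real.sqrt_nonneg _
  have hγsq : γ ^ 2 = a ^ 2 + (1 - μ) * σ / b := Real.sq_sqrt harg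
  -- g(s) ≤ μσ
  have hgs : σ + 2 * a * b * s - b * s ^ 2 ≤ μ * σ := by
    have h1 : γ < a - s := by linarith
    have h2 : γ ^ 2 ≤ (a - s) ^ 2 := by nlinarith
    have h3 : b * γ ^ 2 = b * a ^ 2 + (1 - μ) * σ := by
      rw [hγsq]; field_simp
    nlinarith
  -- Cauchy–Schwarz
  have hu : 0 ≤ u1 ^ 2 + u2 ^ 2 := by positivity
  have hsqs : Real.sqrt s ^ 2 = s := Real.sq_sqrt hs
  have hsqu : Real.sqrt (u1 ^ 2 + u2 ^ 2) ^ 2 = u1 ^ 2 + u2 ^ 2 := Real.sq_sqrt hu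
  have hcs : x * u1 + y * u2 ≤ Real.sqrt s * Real.sqrt (u1 ^ 2 + u2 ^ 2) := by
    have h1 : (x * u1 + y * u2) ^ 2 ≤ s * (u1 ^ 2 + u2 ^ 2) := by
      nlinarith [sq_nonneg (x * u2 - y * u1)]
    have h2 : |x * u1 + y * u2| ≤ Real.sqrt s * Real.sqrt (u1 ^ 2 + u2 ^ 2) := by
      calc |x * u1 + y * u2| = Real.sqrt ((x * u1 + y * u2) ^ 2) :=
            (Real.sqrt_sq_eq_abs _).symm
        _ ≤ Real.sqrt (s * (u1 ^ 2 + u2 ^ 2)) := Real.sqrt_le_sqrt h1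
        _ = Real.sqrt s * Real.sqrt (u1 ^ 2 + u2 ^ 2) := Real.sqrt_mul hs _
    exact le_trans (le_abs_self _) h2
  -- bound on sqrt of forcing
  have hden : 0 < (1 - ε) * μ * |σ| := by
    rw [habs]
    exact mul_pos (mul_pos (by linarith) hμ0) (by linarith)
  have hub : Real.sqrt (u1 ^ 2 + u2 ^ 2) ≤ (1 - ε) * μ * (-σ) * Real.sqrt s := by
    rw [div_le_iff₀ hden] at hlow
    rw [habs] at hlow; linarith [hlow]
  have hforce : x * u1 + y * u2 ≤ (1 - ε) * μ * (-σ) * s := by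
    calc x * u1 + y * u2 ≤ Real.sqrt s * Real.sqrt (u1 ^ 2 + u2 ^ 2) := hcs
      _ ≤ Real.sqrt s * ((1 - ε) * μ * (-σ) * Real.sqrt s) :=
          mul_le_mul_of_nonneg_left hub (Real.sqrt_nonneg s)
      _ = (1 - ε) * μ * (-σ) * s := by linear_combination ((1 - ε) * μ * (-σ)) * hsqs
  have hmain : s * (σ + 2 * a * b * s - b * s ^ 2) + x * u1 + y * u2 ≤ ε * μ * σ * s := by
    have h1 : s * (σ + 2 * a * b * s - b * s ^ 2) ≤ s * (μ * σ) :=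
      mul_le_mul_of_nonneg_left hgs hs
    have hid : s * (μ * σ) + (1 - ε) * μ * (-σ) * s = ε * μ * σ * s := by ring
    linarith [h1, hforce, hid]
  have hneg : ε * μ * σ * s ≤ 0 := by
    have : 0 ≤ ε * μ * (-σ) * s :=
      mul_nonneg (mul_nonneg (mul_nonneg hε0.le hμ0.le) (by linarith)) hs
    linarith
  refine ⟨hmain, hneg, fun h0 => ?_⟩
  by_contra hne
  have hspos : 0 < s := lt_of_le_of_ne hs (Ne.symm hne)
  have : ε * μ * σ * s < 0 := by
    have : 0 < ε * μ * (-σ) * s :=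
      mul_pos (mul_pos (mul_pos hε0 hμ0) (by linarith)) hspos
    linarith
  linarith [hmain, h0.ge, h0.le]
end

section
/- Let a, b, ω > 0, −a²b < σ < 0, μ ∈ (0, 1), and ε ∈ (0, 1), and set γ_μ = √(a² + (1−μ)σ/b). Let u = (u₁, u₂) : [0, ∞) → ℝ² be continuous with sup_{t≥0} ‖u(t)‖ < (1−ε)·μ·|σ|·√(a − γ_μ), and let φ = (x, y) : [0, ∞) → ℝ² be a solution of the forced bistable oscillator ẋ = −ωy + x·g(x²+y²) + u₁(t), ẏ = ωx + y·g(x²+y²) + u₂(t) with x(0)² + y(0)² < a − γ_μ. Then x(t)² + y(t)² < a − γ_μ for all t ≥ 0; i.e., the disk ℬ_μ = {(x,y) : x² + y² < a − γ_μ} is forward invariant for the forced system. -/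
/-- the disk x²+y² < a - γ_μ is forward invariant for the forced system. -/
theorem stmt_12 (a b ω σ μ ε : ℝ) (ha : 0 < a) (hb : 0 < b) (hω : 0 < ω)
    (hσ1 : -a ^ 2 * b < σ) (hσ2 : σ < 0)
    (hμ : μ ∈ Set.Ioo (0 : ℝ) 1) (hε : ε ∈ Set.Ioo (0 : ℝ) 1)
    (u1 u2 : ℝ → ℝ) (hu1 : Continuous u1) (hu2 : Continuous u2)
    (U : ℝ) (hU : ∀ t ≥ (0 : ℝ), Real.sqrt (u1 t ^ 2 + u2 t ^ 2) ≤ U)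
    (hUb : U < (1 - ε) * μ * |σ| * Real.sqrt (a - Real.sqrt (a ^ 2 + (1 - μ) * σ / b)))
    (x y : ℝ → ℝ)
    (hx : ∀ t ≥ (0 : ℝ), HasDerivAt x
      (-ω * y t + x t * (σ + 2 * a * b * (x t ^ 2 + y t ^ 2) - b * (x t ^ 2 + y t ^ 2) ^ 2)
        + u1 t) t)
    (hy : ∀ t ≥ (0 : ℝ), HasDerivAt y
      (ω * x t + y t * (σ + 2 * a * b * (x t ^ 2 + y t ^ 2) - b * (x t ^ 2 + y t ^ 2) ^ 2)
        + u2 t) t)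
    (h0 : x 0 ^ 2 + y 0 ^ 2 < a - Real.sqrt (a ^ 2 + (1 - μ) * σ / b)) :
    ∀ t ≥ (0 : ℝ), x t ^ 2 + y t ^ 2 < a - Real.sqrt (a ^ 2 + (1 - μ) * σ / b) := by
  obtain ⟨hμ0, hμ1⟩ := hμ
  obtain ⟨hε0, hε1⟩ := hε
  set c : ℝ := a ^ 2 + (1 - μ) * σ / b with hc_def
  have hc_pos : 0 < c := by
    have key : 0 < a ^ 2 * b + (1 - μ) * σ := by nlinarith
    have : c = (a ^ 2 * b + (1 - μ) * σ) / b := by rw [hc_def]; field_simp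
    rw [this]; exact div_pos key hb
  have hc_lt : c < a ^ 2 := by
    have h1 : (1 - μ) * σ / b < 0 :=
      div_neg_of_neg_of_pos (mul_neg_of_pos_of_neg (by linarith) hσ2) hb
    rw [hc_def]; linarith
  have hs2 : Real.sqrt c ^ 2 = c := Real.sq_sqrt hc_pos.le
  have hbc : b * Real.sqrt c ^ 2 = a ^ 2 * b + (1 - μ) * σ := by
    rw [hs2, hc_def]; field_simp
  set ρ : ℝ := a - Real.sqrt c with hρ_def
  have hγlt : Real.sqrt c < a := (Real.sqrt_lt' ha).mpr hc_lt
  have hρ : 0 < ρ := sub_pos.mpr hγlt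
  have hg : σ + 2 * a * b * ρ - b * ρ ^ 2 = μ * σ := by
    rw [hρ_def]; linear_combination -hbc
  clear_value ρ
  clear hρ_def hbc hs2 hγlt hc_lt hc_pos
  clear_value c
  set V : ℝ → ℝ := fun s => x s ^ 2 + y s ^ 2 with hV_def
  have hVD : ∀ s ≥ (0 : ℝ), HasDerivAt V
      (2 * x s * (-ω * y s + x s * (σ + 2 * a * b * (x s ^ 2 + y s ^ 2)
          - b * (x s ^ 2 + y s ^ 2) ^ 2) + u1 s)
        + 2 * y s * (ω * x s + y s * (σ + 2 * a * b * (x s ^ 2 + y s ^ 2)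
          - b * (x s ^ 2 + y s ^ 2) ^ 2) + u2 s)) s := by
    intro s hs
    rw [hV_def]
    have h := ((hx s hs).pow 2).add ((hy s hs).pow 2)
    refine HasDerivAt.congr_deriv h ?_
    push_cast
    ring
  have hV_app : ∀ s, V s = x s ^ 2 + y s ^ 2 := fun s => by rw [hV_def]
  clear_value V
  rw [← hV_app 0] at h0
  intro t ht
  rw [← hV_app t]
  by_contra hcon
  push_neg at hcon
  set S : Set ℝ := {s : ℝ | 0 ≤ s ∧ ρ ≤ V s} with hS_def
  have hne : S.Nonempty := ⟨t, ht, hcon⟩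
  have hbdd : BddBelow S := ⟨0, fun s hs => hs.1⟩
  set t₀ : ℝ := sInf S with ht₀_def
  have ht₀0 : 0 ≤ t₀ := le_csInf hne fun s hs => hs.1
  have hmem : ρ ≤ V t₀ := by
    by_contra h
    push_neg at h
    have hcont : ContinuousAt V t₀ := (hVD t₀ ht₀0).continuousAt
    have hnb : V ⁻¹' Set.Iio ρ ∈ nhds t₀ := hcont (isOpen_Iio.mem_nhds h)
    obtain ⟨δ, hδ, hball⟩ := Metric.mem_nhds_iff.mp hnb
    obtain ⟨s, hsS, hs⟩ := (csInf_lt_iff hbdd hne).mp (show sInf S < t₀ + δ by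
      rw [← ht₀_def]; linarith)
    have hles : t₀ ≤ s := csInf_le hbdd hsS
    have : s ∈ Metric.ball t₀ δ := by
      rw [Metric.mem_ball, Real.dist_eq, abs_of_nonneg (by linarith)]
      linarith
    exact absurd (hball this) (not_lt.mpr hsS.2)
  have ht₀pos : 0 < t₀ := by
    rcases ht₀0.lt_or_eq with h | h
    · exact h
    · exfalso; rw [← h] at hmem; exact absurd hmem (not_le.mpr h0)
  have hbefore : ∀ s, 0 ≤ s → s < t₀ → V s < ρ := by
    intro s h0s hst
    by_contra h
    push_neg at h
    exact absurd (csInf_le hbdd ⟨h0s, h⟩) (not_le.mpr hst)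
  have hVeq : V t₀ = ρ := by
    refine le_antisymm ?_ hmem
    have hts : Filter.Tendsto V (nhdsWithin t₀ (Set.Iio t₀)) (nhds (V t₀)) :=
      (hVD t₀ ht₀0).continuousAt.continuousWithinAt
    refine le_of_tendsto hts ?_
    have h1 : Set.Ioi (0:ℝ) ∈ nhdsWithin t₀ (Set.Iio t₀) :=
      nhdsWithin_le_nhds (Ioi_mem_nhds ht₀pos)
    filter_upwards [h1, self_mem_nhdsWithin] with s hs0 hst
    exact (hbefore s (le_of_lt hs0) hst).le
  have hd := hVD t₀ ht₀pos.le
  -- derivative is nonnegative at the hitting time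
  have hd0 : 0 ≤ 2 * x t₀ * (-ω * y t₀ + x t₀ * (σ + 2 * a * b * (x t₀ ^ 2 + y t₀ ^ 2)
          - b * (x t₀ ^ 2 + y t₀ ^ 2) ^ 2) + u1 t₀)
        + 2 * y t₀ * (ω * x t₀ + y t₀ * (σ + 2 * a * b * (x t₀ ^ 2 + y t₀ ^ 2)
          - b * (x t₀ ^ 2 + y t₀ ^ 2) ^ 2) + u2 t₀) := by
    have hslope := hasDerivAt_iff_tendsto_slope.mp hd
    have hmono : nhdsWithin t₀ (Set.Iio t₀) ≤ nhdsWithin t₀ {t₀}ᶜ :=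
      nhdsWithin_mono _ fun s hs => ne_of_lt hs
    refine ge_of_tendsto (hslope.mono_left hmono) ?_
    have h1 : Set.Ioi (0:ℝ) ∈ nhdsWithin t₀ (Set.Iio t₀) :=
      nhdsWithin_le_nhds (Ioi_mem_nhds ht₀pos)
    filter_upwards [h1, self_mem_nhdsWithin] with s hs0 hst
    have hVs : V s < ρ := hbefore s (le_of_lt hs0) hst
    rw [slope_def_field]
    apply div_nonneg_iff.mpr
    refine Or.inr ⟨?_, ?_⟩
    · rw [hVeq]; linarith
    · linarith [Set.mem_Iio.mp hst]
  -- derivative is negative: contradiction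
  have hXY : x t₀ ^ 2 + y t₀ ^ 2 = ρ := by rw [← hV_app t₀]; exact hVeq
  have hU0 : 0 ≤ U := le_trans (Real.sqrt_nonneg _) (hU 0 le_rfl)
  have hsr : Real.sqrt ρ ^ 2 = ρ := Real.sq_sqrt hρ.le
  have hsrpos : 0 < Real.sqrt ρ := Real.sqrt_pos.mpr hρ
  have hCS : x t₀ * u1 t₀ + y t₀ * u2 t₀ ≤ Real.sqrt ρ * U := by
    have hsq : (x t₀ * u1 t₀ + y t₀ * u2 t₀) ^ 2 ≤ ρ * (u1 t₀ ^ 2 + u2 t₀ ^ 2) := by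
      nlinarith [sq_nonneg (x t₀ * u2 t₀ - y t₀ * u1 t₀), hXY]
    have h1 : x t₀ * u1 t₀ + y t₀ * u2 t₀ ≤ Real.sqrt (ρ * (u1 t₀ ^ 2 + u2 t₀ ^ 2)) := by
      refine le_trans (le_abs_self _) ?_
      rw [← Real.sqrt_sq_eq_abs]
      exact Real.sqrt_le_sqrt hsq
    rw [Real.sqrt_mul hρ.le] at h1
    exact h1.trans (mul_le_mul_of_nonneg_left (hU t₀ ht₀pos.le) (Real.sqrt_nonneg ρ))
  have h2 : 2 * x t₀ * (-ω * y t₀ + x t₀ * (σ + 2 * a * b * (x t₀ ^ 2 + y t₀ ^ 2)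
          - b * (x t₀ ^ 2 + y t₀ ^ 2) ^ 2) + u1 t₀)
        + 2 * y t₀ * (ω * x t₀ + y t₀ * (σ + 2 * a * b * (x t₀ ^ 2 + y t₀ ^ 2)
          - b * (x t₀ ^ 2 + y t₀ ^ 2) ^ 2) + u2 t₀)
      = 2 * ρ * (μ * σ) + 2 * (x t₀ * u1 t₀ + y t₀ * u2 t₀) := by
    rw [hXY, hg]
    linear_combination (2 * μ * σ) * hXY
  have habs : |σ| = -σ := abs_of_neg hσ2
  rw [habs] at hUb
  have h4 : Real.sqrt ρ * U < ρ * ((1 - ε) * μ * (-σ)) := by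
    have h4a := mul_lt_mul_of_pos_left hUb hsrpos
    have h4b : Real.sqrt ρ * ((1 - ε) * μ * (-σ) * Real.sqrt ρ) = ρ * ((1 - ε) * μ * (-σ)) := by
      linear_combination ((1 - ε) * μ * (-σ)) * hsr
    linarith [h4a, h4b.le, h4b.ge]
  have hfin : 2 * ρ * (μ * σ) + 2 * (ρ * ((1 - ε) * μ * (-σ))) = 2 * ρ * μ * ε * σ := by ring
  have hpos : 0 < 2 * ρ * μ * ε := by positivity
  have hneg : 2 * ρ * μ * ε * σ < 0 := mul_neg_of_pos_of_neg hpos hσ2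
  linarith [h2, hCS, h4, hfin, hneg, hd0]
end

section
/- Let a, b, ω > 0, −a²b < σ < 0, μ ∈ (0, 1), and ε ∈ (0, 1), and set γ_μ = √(a² + (1−μ)σ/b). Let u = (u₁, u₂) : [0, ∞) → ℝ² be continuous with U := sup_{t≥0} ‖u(t)‖ < (1−ε)·μ·|σ|·√(a − γ_μ), and let φ = (x, y) : [0, ∞) → ℝ² be a solution of the forced bistable oscillator with x(0)² + y(0)² < a − γ_μ. Then limsup_{t→∞} ‖φ(t)‖ ≤ U / ((1−ε)·μ·|σ|): the trajectory is ultimately bounded by U/((1−ε)μ|σ|). -/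
open Filter Set

/-- Barrier lemma: if f starts below c and f' < 0 whenever f = c, then f stays below c. -/
lemma barrier_aux (f f' : ℝ → ℝ) (t₀ c : ℝ)
    (hf : ∀ t ≥ t₀, HasDerivAt f (f' t) t)
    (hneg : ∀ t ≥ t₀, f t = c → f' t < 0)
    (h0 : f t₀ < c) : ∀ t ≥ t₀, f t < c := by
  intro t ht
  by_contra hcon
  push_neg at hcon
  have hcontOn : ContinuousOn f (Set.Ici t₀) :=
    fun s hs => ((hf s hs).continuousAt).continuousWithinAt
  set S : Set ℝ := Set.Ici t₀ ∩ f ⁻¹' Set.Ici c with hS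
  have hSclosed : IsClosed S :=
    hcontOn.preimage_isClosed_of_isClosed isClosed_Ici isClosed_Ici
  have hSne : S.Nonempty := ⟨t, ht, hcon⟩
  have hSbdd : BddBelow S := ⟨t₀, fun s hs => hs.1⟩
  set t₁ := sInf S with ht₁def
  have ht₁S : t₁ ∈ S := hSclosed.csInf_mem hSne hSbdd
  have ht₁0 : t₀ ≤ t₁ := ht₁S.1
  have hfle : ∀ s, t₀ ≤ s → s < t₁ → f s < c := by
    intro s hs0 hst
    by_contra hsc
    push_neg at hsc
    exact absurd (csInf_le hSbdd ⟨hs0, hsc⟩) (not_le.mpr hst)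
  have ht₁pos : t₀ < t₁ := by
    rcases lt_or_eq_of_le ht₁0 with h | h
    · exact h
    · exact absurd ht₁S.2 (not_le.mpr (h ▸ h0))
  have hft₁ : f t₁ = c := by
    refine le_antisymm ?_ ht₁S.2
    have htend : Filter.Tendsto f (nhdsWithin t₁ (Set.Iio t₁)) (nhds (f t₁)) :=
      ((hf t₁ ht₁0).continuousAt.continuousWithinAt)
    refine le_of_tendsto htend ?_
    filter_upwards [Ioo_mem_nhdsLT_of_mem ⟨ht₁pos, le_refl t₁⟩] with s hs
    exact (hfle s hs.1.le hs.2).le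
  have hderiv : f' t₁ < 0 := hneg t₁ ht₁0 hft₁
  have hslope : Filter.Tendsto (slope f t₁) (nhdsWithin t₁ {t₁}ᶜ) (nhds (f' t₁)) :=
    hasDerivAt_iff_tendsto_slope.mp (hf t₁ ht₁0)
  have hslope' : Filter.Tendsto (slope f t₁) (nhdsWithin t₁ (Set.Iio t₁)) (nhds (f' t₁)) :=
    hslope.mono_left (nhdsWithin_mono _ fun s hs => ne_of_lt hs)
  have hev : ∀ᶠ s in nhdsWithin t₁ (Set.Iio t₁), slope f t₁ s < 0 :=
    hslope'.eventually_lt_const hderiv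
  have hev2 : ∀ᶠ s in nhdsWithin t₁ (Set.Iio t₁), s ∈ Set.Ioo t₀ t₁ :=
    Ioo_mem_nhdsLT_of_mem ⟨ht₁pos, le_refl t₁⟩
  obtain ⟨s, hs1, hs2⟩ := (hev.and hev2).exists
  have hslt : f s < c := hfle s hs2.1.le hs2.2
  have hd : s - t₁ < 0 := by linarith [hs2.2]
  have hsl : (f s - f t₁) / (s - t₁) < 0 := by
    have := hs1
    rwa [slope_def_field] at this
  have hpos : 0 < f s - f t₁ := by
    rcases div_neg_iff.mp hsl with ⟨h1, _⟩ | ⟨_, h2⟩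
    · exact h1
    · linarith
  linarith [hft₁ ▸ hpos]

/-- Descent lemma. -/
lemma descend_aux (f f' : ℝ → ℝ) (t₀ κ : ℝ)
    (hf : ∀ t ≥ t₀, HasDerivAt f (f' t) t)
    (hd : ∀ t ≥ t₀, f' t ≤ -κ) :
    ∀ t ≥ t₀, f t ≤ f t₀ - κ * (t - t₀) := by
  intro t ht
  have hganti : AntitoneOn (fun s => f s + κ * s) (Set.Ici t₀) := by
    have hds : ∀ s ∈ interior (Set.Ici t₀), HasDerivAt (fun s => f s + κ * s) (f' s + κ * 1) s := by
      intro s hs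
      rw [interior_Ici] at hs
      exact (hf s (le_of_lt hs)).add ((hasDerivAt_id s).const_mul κ)
    apply antitoneOn_of_deriv_nonpos (convex_Ici t₀)
    · exact fun s hs =>
        (((hf s hs).add ((hasDerivAt_id s).const_mul κ)).continuousAt).continuousWithinAt
    · exact fun s hs => ((hds s hs).differentiableAt).differentiableWithinAt
    · intro s hs
      rw [(hds s hs).deriv]
      rw [interior_Ici] at hs
      have := hd s (le_of_lt hs)
      linarith
  have := hganti Set.self_mem_Ici ht ht
  simp only at this
  linarith

lemma cauchy2_aux (p q r s : ℝ) : (p * r + q * s) ^ 2 ≤ (p ^ 2 + q ^ 2) * (r ^ 2 + s ^ 2) := by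
  nlinarith [sq_nonneg (p * s - q * r)]

/-- ultimate boundedness of forced trajectories by U/((1-ε)μ|σ|). -/
theorem stmt_13 (a b ω σ μ ε : ℝ) (ha : 0 < a) (hb : 0 < b) (hω : 0 < ω)
    (hσ1 : -a ^ 2 * b < σ) (hσ2 : σ < 0)
    (hμ : μ ∈ Set.Ioo (0 : ℝ) 1) (hε : ε ∈ Set.Ioo (0 : ℝ) 1)
    (u1 u2 : ℝ → ℝ) (hu1 : Continuous u1) (hu2 : Continuous u2)
    (U : ℝ) (hU : ∀ t ≥ (0 : ℝ), Real.sqrt (u1 t ^ 2 + u2 t ^ 2) ≤ U)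
    (hUb : U < (1 - ε) * μ * |σ| * Real.sqrt (a - Real.sqrt (a ^ 2 + (1 - μ) * σ / b)))
    (x y : ℝ → ℝ)
    (hx : ∀ t ≥ (0 : ℝ), HasDerivAt x
      (-ω * y t + x t * (σ + 2 * a * b * (x t ^ 2 + y t ^ 2) - b * (x t ^ 2 + y t ^ 2) ^ 2)
        + u1 t) t)
    (hy : ∀ t ≥ (0 : ℝ), HasDerivAt y
      (ω * x t + y t * (σ + 2 * a * b * (x t ^ 2 + y t ^ 2) - b * (x t ^ 2 + y t ^ 2) ^ 2)
        + u2 t) t)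
    (h0 : x 0 ^ 2 + y 0 ^ 2 < a - Real.sqrt (a ^ 2 + (1 - μ) * σ / b)) :
    Filter.limsup (fun t => Real.sqrt (x t ^ 2 + y t ^ 2)) Filter.atTop ≤
      U / ((1 - ε) * μ * |σ|) := by
  obtain ⟨hμ0, hμ1⟩ := hμ
  obtain ⟨hε0, hε1⟩ := hε
  have habs : |σ| = -σ := abs_of_neg hσ2
  have habspos : 0 < |σ| := abs_pos.mpr (ne_of_lt hσ2)
  -- basic quantities
  set γ := Real.sqrt (a ^ 2 + (1 - μ) * σ / b) with hγdef
  have harg : 0 ≤ a ^ 2 + (1 - μ) * σ / b := by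
    have hms : 0 ≤ μ * (-σ) := mul_nonneg hμ0.le (neg_nonneg.mpr hσ2.le)
    have h1 : -a ^ 2 * b < (1 - μ) * σ := by linarith [hms]
    have h2 : -a ^ 2 < (1 - μ) * σ / b := (lt_div_iff₀ hb).mpr (by linarith [hms])
    linarith
  have hγsq : γ ^ 2 = a ^ 2 + (1 - μ) * σ / b := Real.sq_sqrt harg
  have hγnn : 0 ≤ γ := Real.sqrt_nonneg _
  have hγa : γ < a := by
    have h1 : a ^ 2 + (1 - μ) * σ / b < a ^ 2 := by
      have : (1 - μ) * σ / b < 0 :=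
        div_neg_of_neg_of_pos (mul_neg_of_pos_of_neg (by linarith) hσ2) hb
      linarith
    have := Real.sqrt_lt_sqrt harg h1
    rwa [Real.sqrt_sq ha.le] at this
  set K := a - γ with hKdef
  have hK : 0 < K := by simp [hKdef]; linarith
  have hKa : K ≤ a := by simp [hKdef]; linarith
  have hbγ : b * γ ^ 2 = b * a ^ 2 + (1 - μ) * σ := by
    rw [hγsq]; field_simp
  have hgK : σ + 2 * a * b * K - b * K ^ 2 = μ * σ := by
    rw [hKdef]; linear_combination -hbγ
  have hgmono : ∀ s, 0 ≤ s → s ≤ K → σ + 2 * a * b * s - b * s ^ 2 ≤ μ * σ := by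
    intro s hs0 hsK
    have hprod : 0 ≤ b * (K - s) * (2 * a - K - s) := by
      apply mul_nonneg (mul_nonneg hb.le (by linarith))
      have : K ≤ a := hKa
      linarith
    linarith [hgK, hprod]
  have hU0 : 0 ≤ U := le_trans (Real.sqrt_nonneg _) (hU 0 le_rfl)
  set P := μ * |σ| with hPdef
  have hP : 0 < P := mul_pos hμ0 habspos
  set M := (1 - ε) * μ * |σ| with hMdef
  have hMP : M = (1 - ε) * P := by rw [hMdef, hPdef]; ring
  have hM : 0 < M := by rw [hMP]; exact mul_pos (by linarith) hP
  set R := U / M with hRdef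
  have hR0 : 0 ≤ R := div_nonneg hU0 hM.le
  have hUM : U = M * R := by rw [hRdef]; field_simp
  have hKpos2 : 0 < Real.sqrt K := Real.sqrt_pos.mpr hK
  have hRK : R < Real.sqrt K := by
    rw [hRdef, div_lt_iff₀ hM]
    calc U < M * Real.sqrt K := hUb
    _ = Real.sqrt K * M := by ring
  -- the squared radius and its derivative
  set V : ℝ → ℝ := fun t => x t ^ 2 + y t ^ 2 with hVdef
  set Vd : ℝ → ℝ := fun t =>
      2 * (x t ^ 2 + y t ^ 2) *
        (σ + 2 * a * b * (x t ^ 2 + y t ^ 2) - b * (x t ^ 2 + y t ^ 2) ^ 2)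
      + 2 * (x t * u1 t + y t * u2 t) with hVddef
  have hV : ∀ t ≥ (0 : ℝ), HasDerivAt V (Vd t) t := by
    intro t ht
    have Hx := (hx t ht).pow 2
    have Hy := (hy t ht).pow 2
    have := Hx.add Hy
    convert this using 1
    · rfl
    · rfl
    · ext s; simp [hVdef]
    · simp only [hVddef, Nat.cast_ofNat, Nat.reduceSub, pow_one]
      ring
  have hV0 : ∀ t, 0 ≤ V t := fun t => add_nonneg (sq_nonneg _) (sq_nonneg _)
  -- derivative bound in the invariant region
  have hVdb : ∀ t ≥ (0 : ℝ), V t ≤ K →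
      Vd t ≤ 2 * Real.sqrt (V t) * (U - P * Real.sqrt (V t)) := by
    intro t ht hVK
    have hs0 : 0 ≤ V t := hV0 t
    have hr0 : 0 ≤ Real.sqrt (V t) := Real.sqrt_nonneg _
    have hr2 : Real.sqrt (V t) ^ 2 = V t := Real.sq_sqrt hs0
    have hg : σ + 2 * a * b * V t - b * V t ^ 2 ≤ μ * σ := hgmono _ hs0 hVK
    have hcs : x t * u1 t + y t * u2 t ≤ Real.sqrt (V t) * U := by
      have h1 : x t * u1 t + y t * u2 t ≤ Real.sqrt (V t) * Real.sqrt (u1 t ^ 2 + u2 t ^ 2) := by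
        rcases le_or_gt (x t * u1 t + y t * u2 t) 0 with h | h
        · exact h.trans (mul_nonneg (Real.sqrt_nonneg _) (Real.sqrt_nonneg _))
        · have h2 : (x t * u1 t + y t * u2 t) ^ 2 ≤ V t * (u1 t ^ 2 + u2 t ^ 2) := by
            have hVt : V t = x t ^ 2 + y t ^ 2 := rfl
            rw [hVt]
            exact cauchy2_aux (x t) (y t) (u1 t) (u2 t)
          calc x t * u1 t + y t * u2 t
              = Real.sqrt ((x t * u1 t + y t * u2 t) ^ 2) := (Real.sqrt_sq h.le).symm
            _ ≤ Real.sqrt (V t * (u1 t ^ 2 + u2 t ^ 2)) := Real.sqrt_le_sqrt h2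
            _ = Real.sqrt (V t) * Real.sqrt (u1 t ^ 2 + u2 t ^ 2) := Real.sqrt_mul hs0 _
      exact h1.trans (mul_le_mul_of_nonneg_left (hU t ht) hr0)
    have hsg : V t * (σ + 2 * a * b * V t - b * V t ^ 2) ≤ V t * (μ * σ) :=
      mul_le_mul_of_nonneg_left hg hs0
    have hVdt : Vd t = 2 * V t * (σ + 2 * a * b * V t - b * V t ^ 2)
        + 2 * (x t * u1 t + y t * u2 t) := rfl
    rw [hVdt, hPdef, habs]
    have hmm : μ * σ * Real.sqrt (V t) ^ 2 = μ * σ * V t := by rw [hr2]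
    linarith [hsg, hcs, hmm]
  -- invariance of {V < K}
  have hinv : ∀ t ≥ (0 : ℝ), V t < K := by
    apply barrier_aux V Vd 0 K hV _ h0
    intro t ht hVK
    have hbd := hVdb t ht (le_of_eq hVK)
    rw [hVK] at hbd
    have hUlt : U < P * Real.sqrt K := by
      calc U < M * Real.sqrt K := hUb
      _ ≤ P * Real.sqrt K := by
        rw [hMP]
        have : (1 - ε) * P ≤ P := by linarith [mul_nonneg hε0.le hP.le]
        exact mul_le_mul_of_nonneg_right this hKpos2.le
    have h2 : U - P * Real.sqrt K < 0 := by linarith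
    have h3 : 2 * Real.sqrt K * (U - P * Real.sqrt K) < 0 :=
      mul_neg_of_pos_of_neg (by linarith) h2
    linarith
  -- key: for every c strictly between R and √K, eventually √(V t) ≤ c
  have key : ∀ c, R < c → c < Real.sqrt K →
      ∀ᶠ t in Filter.atTop, Real.sqrt (V t) ≤ c := by
    intro c hRc hcK
    have hc0 : 0 < c := lt_of_le_of_lt hR0 hRc
    have hcK2 : c ^ 2 < K := (Real.lt_sqrt hc0.le).mp hcK
    have hUc : U < P * c := by
      rw [hUM, hMP]
      have h1 : P * R < P * c := mul_lt_mul_of_pos_left hRc hP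
      have h2 : 0 ≤ ε * (P * R) := mul_nonneg hε0.le (mul_nonneg hP.le hR0)
      linarith [h1, h2]
    set κ := 2 * c * (P * c - U) with hκdef
    have hκ : 0 < κ := by
      rw [hκdef]; apply mul_pos (by linarith); linarith
    have hA : ∀ t ≥ (0 : ℝ), c ^ 2 ≤ V t → Vd t ≤ -κ := by
      intro t ht hcV
      have hVK := (hinv t ht).le
      have hb1 := hVdb t ht hVK
      have hrc : c ≤ Real.sqrt (V t) := (Real.le_sqrt hc0.le (hV0 t)).mpr hcV
      have hfact : 0 ≤ (Real.sqrt (V t) - c) * (P * (Real.sqrt (V t) + c) - U) := by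
        apply mul_nonneg (by linarith)
        have h4 : 0 ≤ P * Real.sqrt (V t) := mul_nonneg hP.le (Real.sqrt_nonneg _)
        linarith [h4, hUc]
      rw [hκdef]
      linarith [hb1, hfact]  -- linear combination
    -- there is a time when V < c²
    have hB : ∃ t₀ ≥ (0 : ℝ), V t₀ < c ^ 2 := by
      by_contra hcon
      push_neg at hcon
      have hd : ∀ t ≥ (0 : ℝ), Vd t ≤ -κ := fun t ht => hA t ht (hcon t ht)
      set T := (V 0 - c ^ 2) / κ + 1 with hTdef
      have hT0 : (0 : ℝ) ≤ T := by
        rw [hTdef]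
        have : 0 ≤ (V 0 - c ^ 2) / κ := div_nonneg (by linarith [hcon 0 le_rfl]) hκ.le
        linarith
      have := descend_aux V Vd 0 κ hV hd T hT0
      have hκT : κ * T = (V 0 - c ^ 2) + κ := by
        rw [hTdef]; field_simp
      have h1 := hcon T hT0
      rw [sub_zero] at this
      linarith [this, h1, hκT]
    obtain ⟨t₀, ht₀0, hVt₀⟩ := hB
    have hC : ∀ t ≥ t₀, V t < c ^ 2 := by
      apply barrier_aux V Vd t₀ (c ^ 2) (fun t ht => hV t (ht₀0.trans ht)) _ hVt₀
      intro t ht heq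
      have := hA t (ht₀0.trans ht) (le_of_eq heq.symm)
      linarith
    filter_upwards [Filter.eventually_ge_atTop t₀] with t ht
    have := (hC t ht).le
    calc Real.sqrt (V t) ≤ Real.sqrt (c ^ 2) := Real.sqrt_le_sqrt this
    _ = c := Real.sqrt_sq hc0.le
  -- conclude via limsup
  have hgoal : Filter.limsup (fun t => Real.sqrt (V t)) Filter.atTop ≤ R := by
    by_contra hlt
    push_neg at hlt
    set L := Filter.limsup (fun t => Real.sqrt (V t)) Filter.atTop with hLdef
    set c := min ((R + L) / 2) ((R + Real.sqrt K) / 2) with hcdef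
    have hRc : R < c := by
      rw [hcdef]
      apply lt_min <;> [linarith; linarith]
    have hcK : c < Real.sqrt K := by
      rw [hcdef]
      calc min ((R + L) / 2) ((R + Real.sqrt K) / 2) ≤ (R + Real.sqrt K) / 2 :=
        min_le_right _ _
      _ < Real.sqrt K := by linarith
    have hcL : c < L := by
      rw [hcdef]
      calc min ((R + L) / 2) ((R + Real.sqrt K) / 2) ≤ (R + L) / 2 := min_le_left _ _
      _ < L := by linarith
    have hcob : Filter.IsCoboundedUnder (· ≤ ·) Filter.atTop (fun t => Real.sqrt (V t)) :=
      Filter.isCoboundedUnder_le_of_le Filter.atTop (fun t => Real.sqrt_nonneg (V t))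
    have := Filter.limsup_le_of_le hcob (key c hRc hcK)
    rw [← hLdef] at this
    linarith
  exact hgoal
end

section
/- Let a, b, ω > 0, −a²b < σ < 0, μ ∈ (0, 1), and ε ∈ (0, 1), and set γ_μ = √(a² + (1−μ)σ/b). There exists a class-𝒦𝓛 function β : [0,∞) × [0,∞) → [0,∞) such that the following holds: for every continuous input u = (u₁, u₂) : [0, ∞) → ℝ² with sup_{t≥0} ‖u(t)‖ < (1−ε)·μ·|σ|·√(a − γ_μ) and every solution φ = (x, y) : [0, ∞) → ℝ² of the forced bistable oscillator with x(0)² + y(0)² < a − γ_μ, one has ‖φ(t)‖ ≤ β(‖φ(0)‖, t) + (1/((1−ε)·μ·|σ|))·sup_{t≥0} ‖u(t)‖ for all t ≥ 0. -/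
set_option maxHeartbeats 4000000 in
/-- input-to-state stability of the forced bistable oscillator
with a class-𝒦𝓛 transient bound. -/
theorem stmt_14 (a b ω σ μ ε : ℝ) (ha : 0 < a) (hb : 0 < b) (hω : 0 < ω)
    (hσ1 : -a ^ 2 * b < σ) (hσ2 : σ < 0)
    (hμ : μ ∈ Set.Ioo (0 : ℝ) 1) (hε : ε ∈ Set.Ioo (0 : ℝ) 1) :
    ∃ β : ℝ → ℝ → ℝ,
      (∀ r s, 0 ≤ r → 0 ≤ s → 0 ≤ β r s) ∧
      (∀ s, 0 ≤ s → ContinuousOn (fun r => β r s) (Set.Ici 0) ∧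
        StrictMonoOn (fun r => β r s) (Set.Ici 0) ∧ β 0 s = 0) ∧
      (∀ r, 0 ≤ r → AntitoneOn (fun s => β r s) (Set.Ici 0) ∧
        Filter.Tendsto (fun s => β r s) Filter.atTop (nhds 0)) ∧
      (∀ u1 u2 : ℝ → ℝ, Continuous u1 → Continuous u2 →
        ∀ U : ℝ, (∀ t ≥ (0 : ℝ), Real.sqrt (u1 t ^ 2 + u2 t ^ 2) ≤ U) →
        U < (1 - ε) * μ * |σ| * Real.sqrt (a - Real.sqrt (a ^ 2 + (1 - μ) * σ / b)) →
        ∀ x y : ℝ → ℝ,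
        (∀ t ≥ (0 : ℝ), HasDerivAt x
          (-ω * y t + x t * (σ + 2 * a * b * (x t ^ 2 + y t ^ 2)
            - b * (x t ^ 2 + y t ^ 2) ^ 2) + u1 t) t) →
        (∀ t ≥ (0 : ℝ), HasDerivAt y
          (ω * x t + y t * (σ + 2 * a * b * (x t ^ 2 + y t ^ 2)
            - b * (x t ^ 2 + y t ^ 2) ^ 2) + u2 t) t) →
        x 0 ^ 2 + y 0 ^ 2 < a - Real.sqrt (a ^ 2 + (1 - μ) * σ / b) →
        ∀ t ≥ (0 : ℝ), Real.sqrt (x t ^ 2 + y t ^ 2) ≤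
          β (Real.sqrt (x 0 ^ 2 + y 0 ^ 2)) t + U / ((1 - ε) * μ * |σ|)) := by
  obtain ⟨hμ0, hμ1⟩ := hμ
  obtain ⟨hε0, hε1⟩ := hε
  have habs : |σ| = -σ := abs_of_neg hσ2
  set k : ℝ := μ * (-σ) with hkdef
  clear_value k
  have hk : 0 < k := by rw [hkdef]; exact mul_pos hμ0 (by linarith)
  refine ⟨fun r s => r * Real.exp (-(k / 2) * s), ?_, ?_, ?_, ?_⟩
  · intro r s hr _
    exact mul_nonneg hr (Real.exp_pos _).le
  · intro s _
    refine ⟨(continuous_id.mul continuous_const).continuousOn, ?_, zero_mul _⟩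
    intro r _ r' _ hlt
    exact mul_lt_mul_of_pos_right hlt (Real.exp_pos _)
  · intro r hr
    constructor
    · intro s _ s' _ hss
      have : Real.exp (-(k / 2) * s') ≤ Real.exp (-(k / 2) * s) :=
        Real.exp_le_exp.2 (by nlinarith)
      exact mul_le_mul_of_nonneg_left this hr
    · have h1 : Filter.Tendsto (fun s : ℝ => -(k / 2) * s) Filter.atTop Filter.atBot :=
        Filter.tendsto_id.const_mul_atTop_of_neg (by linarith)
      have h2 : Filter.Tendsto (fun s : ℝ => Real.exp (-(k / 2) * s)) Filter.atTop (nhds 0) :=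
        Real.tendsto_exp_atBot.comp h1
      have := h2.const_mul r
      simpa using this
  · intro u1 u2 hu1 hu2 U hUb hUlt x y hdx hdy hinit
    set γ : ℝ := Real.sqrt (a ^ 2 + (1 - μ) * σ / b) with hγdef
    set M : ℝ := a - γ with hMdef
    clear_value γ M
    -- basic facts
    have hU0 : 0 ≤ U := le_trans (Real.sqrt_nonneg _) (hUb 0 le_rfl)
    have hqpos : 0 ≤ a ^ 2 + (1 - μ) * σ / b := by
      have key : 0 ≤ a ^ 2 * b + (1 - μ) * σ := by
        nlinarith [mul_pos hμ0 (neg_pos.2 hσ2)]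
      have heq : a ^ 2 + (1 - μ) * σ / b = (a ^ 2 * b + (1 - μ) * σ) / b := by field_simp
      rw [heq]; exact div_nonneg key hb.le
    have hγ2 : γ ^ 2 = a ^ 2 + (1 - μ) * σ / b := by
      rw [hγdef]; exact Real.sq_sqrt hqpos
    have hγ0 : 0 ≤ γ := by rw [hγdef]; exact Real.sqrt_nonneg _
    have hγa : γ < a := by
      rw [hγdef]
      refine (Real.sqrt_lt' ha).2 ?_
      have : (1 - μ) * σ / b < 0 := div_neg_of_neg_of_pos (by nlinarith) hb
      linarith
    have hM : 0 < M := by simp only [hMdef]; linarith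
    have hMa : M ≤ a := by simp only [hMdef]; linarith
    have hgM : σ + 2 * a * b * M - b * M ^ 2 = μ * σ := by
      have hMγ : a - M = γ := by rw [hMdef]; ring
      have h : (a - M) ^ 2 = a ^ 2 + (1 - μ) * σ / b := by rw [hMγ]; exact hγ2
      field_simp at h
      nlinarith
    have hg_le : ∀ s : ℝ, 0 ≤ s → s ≤ M → σ + 2 * a * b * s - b * s ^ 2 ≤ μ * σ := by
      intro s hs hsM
      nlinarith [mul_nonneg (mul_nonneg hb.le (sub_nonneg.2 hsM))
        (by linarith : (0:ℝ) ≤ 2 * a - s - M)]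
    have hsqrtM : 0 < Real.sqrt M := Real.sqrt_pos.2 hM
    have hsqrtM2 : Real.sqrt M ^ 2 = M := Real.sq_sqrt hM.le
    have hUltM : U < (1 - ε) * k * Real.sqrt M := by
      calc U < (1 - ε) * μ * |σ| * Real.sqrt M := hUlt
      _ = (1 - ε) * k * Real.sqrt M := by rw [habs, hkdef]; ring
    -- the squared radius and its derivative
    set w : ℝ → ℝ := fun t => x t ^ 2 + y t ^ 2 with hwdef
    set Dw : ℝ → ℝ := fun t =>
      2 * w t * (σ + 2 * a * b * w t - b * w t ^ 2) + 2 * (x t * u1 t + y t * u2 t)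
      with hDwdef
    clear_value w Dw
    have hw' : ∀ t ∈ Set.Ici (0 : ℝ), HasDerivAt w (Dw t) t := by
      intro t ht
      have h := ((hdx t ht).fun_pow 2).fun_add ((hdy t ht).fun_pow 2)
      rw [hwdef, hDwdef]
      simp only [hwdef]
      exact h.congr_deriv (by ring)
    have hw0 : ∀ t, 0 ≤ w t := by
      intro t; simp only [hwdef]; positivity
    have hcont : ContinuousOn w (Set.Ici 0) :=
      fun t ht => ((hw' t ht).continuousAt).continuousWithinAt
    -- Cauchy–Schwarz bound on the input term
    have hCS : ∀ t : ℝ, 0 ≤ t → x t * u1 t + y t * u2 t ≤ Real.sqrt (w t) * U := by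
      intro t ht
      have hUt := hUb t ht
      simp only [hwdef]
      rcases le_or_gt (x t * u1 t + y t * u2 t) 0 with h | h
      · have := Real.sqrt_nonneg (x t ^ 2 + y t ^ 2)
        nlinarith
      · have h4 : (x t * u1 t + y t * u2 t) ^ 2 ≤ (x t ^ 2 + y t ^ 2) * (u1 t ^ 2 + u2 t ^ 2) := by
          nlinarith [sq_nonneg (x t * u2 t - y t * u1 t)]
        calc x t * u1 t + y t * u2 t
            ≤ Real.sqrt ((x t ^ 2 + y t ^ 2) * (u1 t ^ 2 + u2 t ^ 2)) :=
              (Real.le_sqrt h.le (by positivity)).2 h4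
        _ = Real.sqrt (x t ^ 2 + y t ^ 2) * Real.sqrt (u1 t ^ 2 + u2 t ^ 2) :=
              Real.sqrt_mul (by positivity) _
        _ ≤ Real.sqrt (x t ^ 2 + y t ^ 2) * U :=
              mul_le_mul_of_nonneg_left hUt (Real.sqrt_nonneg _)
    -- strict negativity of the derivative at the boundary
    have hbdry : ∀ t : ℝ, 0 ≤ t → w t = M → Dw t < 0 := by
      intro t ht hwt
      have h1 : x t * u1 t + y t * u2 t ≤ Real.sqrt M * U := by
        have := hCS t ht; rwa [hwt] at this
      have h2 : Real.sqrt M * U < Real.sqrt M * ((1 - ε) * k * Real.sqrt M) :=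
        mul_lt_mul_of_pos_left hUltM hsqrtM
      have h3 : Real.sqrt M * ((1 - ε) * k * Real.sqrt M) = (1 - ε) * k * M := by
        nlinarith [hsqrtM2]
      have h4 : σ + 2 * a * b * M - b * M ^ 2 = μ * σ := hgM
      simp only [hDwdef, hwt, h4]
      have hμσ : μ * σ = -k := by rw [hkdef]; ring
      nlinarith [mul_pos (mul_pos hε0 hk) hM]
    -- forward invariance of {w < M}
    have hinv : ∀ t : ℝ, 0 ≤ t → w t < M := by
      by_contra hcon
      push_neg at hcon
      obtain ⟨t₀, ht₀, hMle⟩ := hcon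
      set S : Set ℝ := Set.Ici 0 ∩ w ⁻¹' Set.Ici M with hSdef
      have hSne : S.Nonempty := ⟨t₀, ht₀, hMle⟩
      have hSbdd : BddBelow S := ⟨0, fun t htS => htS.1⟩
      have hSclosed : IsClosed S :=
        hcont.preimage_isClosed_of_isClosed isClosed_Ici isClosed_Ici
      set t₁ : ℝ := sInf S with ht₁def
      have ht₁S : t₁ ∈ S := hSclosed.csInf_mem hSne hSbdd
      have ht₁0 : 0 ≤ t₁ := ht₁S.1
      have hMt₁ : M ≤ w t₁ := ht₁S.2
      have hw0M : w 0 < M := by simp only [hwdef]; exact hinit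
      have ht₁pos : 0 < t₁ := by
        rcases lt_or_eq_of_le ht₁0 with h | h
        · exact h
        · exfalso; rw [← h] at hMt₁; linarith
      have hlt : ∀ s : ℝ, 0 ≤ s → s < t₁ → w s < M := by
        intro s hs hst
        by_contra h
        exact absurd (csInf_le hSbdd ⟨hs, le_of_not_gt h⟩) (not_le.2 hst)
      have hwt₁le : w t₁ ≤ M := by
        have htend : Filter.Tendsto w (nhdsWithin t₁ (Set.Iio t₁)) (nhds (w t₁)) :=
          ((hw' t₁ ht₁0).continuousAt).continuousWithinAt.tendsto
        refine le_of_tendsto htend ?_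
        filter_upwards [Ioo_mem_nhdsLT ht₁pos] with z hz
        exact (hlt z hz.1.le hz.2).le
      have hwt₁ : w t₁ = M := le_antisymm hwt₁le hMt₁
      have hDneg : Dw t₁ < 0 := hbdry t₁ ht₁0 hwt₁
      -- slope contradiction from the left
      have hslope : Filter.Tendsto (slope w t₁) (nhdsWithin t₁ {t₁}ᶜ) (nhds (Dw t₁)) :=
        hasDerivAt_iff_tendsto_slope.1 (hw' t₁ ht₁0)
      have hslope' : Filter.Tendsto (slope w t₁) (nhdsWithin t₁ (Set.Iio t₁)) (nhds (Dw t₁)) :=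
        hslope.mono_left (nhdsWithin_mono t₁ (fun z hz => ne_of_lt hz))
      have hev1 : ∀ᶠ z in nhdsWithin t₁ (Set.Iio t₁), slope w t₁ z < 0 :=
        hslope'.eventually_lt_const hDneg
      have hev2 : Set.Ioo 0 t₁ ∈ nhdsWithin t₁ (Set.Iio t₁) := Ioo_mem_nhdsLT ht₁pos
      obtain ⟨z, hz1, hz2⟩ := (hev1.and (Filter.eventually_mem_set.2 hev2)).exists
      have hzslope : (w z - w t₁) / (z - t₁) < 0 := by rwa [slope_def_field] at hz1
      have hzlt : w z < M := hlt z hz2.1.le hz2.2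
      rcases div_neg_iff.1 hzslope with ⟨h1, h2⟩ | ⟨h1, h2⟩
      · linarith [hMt₁, hzlt]
      · linarith [hz2.2]
    -- Grönwall bound
    intro t ht
    have hbound : ∀ s ∈ Set.Ico (0 : ℝ) t, Dw s ≤ (-k) * w s + U ^ 2 / k := by
      intro s hs
      have hwM : w s ≤ M := (hinv s hs.1).le
      have hgle : σ + 2 * a * b * w s - b * w s ^ 2 ≤ μ * σ := hg_le _ (hw0 s) hwM
      have hcs := hCS s hs.1
      have hr2 : Real.sqrt (w s) ^ 2 = w s := Real.sq_sqrt (hw0 s)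
      have hamgm : 2 * (Real.sqrt (w s) * U) ≤ k * w s + U ^ 2 / k := by
        have h2 : 2 * (Real.sqrt (w s) * U) * k ≤ k * Real.sqrt (w s) ^ 2 * k + U ^ 2 := by
          nlinarith [sq_nonneg (k * Real.sqrt (w s) - U)]
        rw [hr2] at h2
        have h3 : 2 * (Real.sqrt (w s) * U) ≤ (k * w s * k + U ^ 2) / k :=
          (le_div_iff₀ hk).2 h2
        have h4 : (k * w s * k + U ^ 2) / k = k * w s + U ^ 2 / k := by
          field_simp
        linarith
      have hμσ : μ * σ = -k := by rw [hkdef]; ring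
      have hgle' : σ + 2 * a * b * w s - b * w s ^ 2 ≤ -k := hμσ ▸ hgle
      have h1 : 2 * w s * (σ + 2 * a * b * w s - b * w s ^ 2) ≤ 2 * w s * (-k) :=
        mul_le_mul_of_nonneg_left hgle' (by linarith [hw0 s])
      simp only [hDwdef]
      linarith [h1, hcs, hamgm]
    have hgron := le_gronwallBound_of_liminf_deriv_right_le
      (f := w) (f' := Dw) (δ := w 0) (K := -k) (ε := U ^ 2 / k) (a := 0) (b := t)
      (hcont.mono Set.Icc_subset_Ici_self)
      (fun s hs r hr => ((hw' s (Set.mem_Ici.2 hs.1)).hasDerivWithinAt).liminf_right_slope_le hr)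
      le_rfl hbound t (Set.mem_Icc.2 ⟨ht, le_rfl⟩)
    simp only [sub_zero, gronwallBound_of_K_ne_0 (by linarith : (-k : ℝ) ≠ 0)] at hgron
    have hexp : Real.exp (-k * t) ≤ 1 := Real.exp_le_one_iff.2 (by nlinarith)
    have hexp0 : 0 < Real.exp (-k * t) := Real.exp_pos _
    have hgron2 : w t ≤ w 0 * Real.exp (-k * t) + U ^ 2 / k ^ 2 := by
      have h1 : U ^ 2 / k / -k * (Real.exp (-k * t) - 1)
          = U ^ 2 / k ^ 2 * (1 - Real.exp (-k * t)) := by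
        field_simp; ring
      rw [h1] at hgron
      have h2 : U ^ 2 / k ^ 2 * (1 - Real.exp (-k * t)) ≤ U ^ 2 / k ^ 2 := by
        have : 0 ≤ U ^ 2 / k ^ 2 := by positivity
        nlinarith
      linarith
    -- take square roots
    have hE : Real.exp (-(k / 2) * t) ^ 2 = Real.exp (-k * t) := by
      rw [sq, ← Real.exp_add]; ring_nf
    have hA0 : 0 ≤ Real.sqrt (w 0) * Real.exp (-(k / 2) * t) :=
      mul_nonneg (Real.sqrt_nonneg _) (Real.exp_pos _).le
    have hUk0 : 0 ≤ U / k := div_nonneg hU0 hk.le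
    have hsum : w t ≤ (Real.sqrt (w 0) * Real.exp (-(k / 2) * t) + U / k) ^ 2 := by
      have e1 : (Real.sqrt (w 0) * Real.exp (-(k / 2) * t)) ^ 2
          = w 0 * Real.exp (-k * t) := by
        rw [mul_pow, hE, Real.sq_sqrt (hw0 0)]
      have e2 : (U / k) ^ 2 = U ^ 2 / k ^ 2 := by ring
      clear hdx hdy hw0 hw' hcont hCS hbdry hinv hbound hgron hUb
      nlinarith [mul_nonneg hA0 hUk0, hgron2, e1, e2]
    have hAB : Real.sqrt (w t) ≤
        Real.sqrt (w 0) * Real.exp (-(k / 2) * t) + U / k := by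
      calc Real.sqrt (w t)
          ≤ Real.sqrt ((Real.sqrt (w 0) * Real.exp (-(k / 2) * t) + U / k) ^ 2) :=
            Real.sqrt_le_sqrt hsum
      _ = _ := Real.sqrt_sq (add_nonneg hA0 hUk0)
    have hUk : U / k ≤ U / ((1 - ε) * μ * |σ|) := by
      have hc : 0 < (1 - ε) * μ * |σ| := by
        rw [habs]; apply mul_pos (mul_pos (by linarith) hμ0); linarith
      have hck : (1 - ε) * μ * |σ| ≤ k := by
        rw [habs, hkdef]; nlinarith
      gcongr
    simp only [hwdef] at hAB ⊢
    calc Real.sqrt (x t ^ 2 + y t ^ 2)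
        ≤ Real.sqrt (x 0 ^ 2 + y 0 ^ 2) * Real.exp (-(k / 2) * t) + U / k := hAB
    _ ≤ Real.sqrt (x 0 ^ 2 + y 0 ^ 2) * Real.exp (-(k / 2) * t)
        + U / ((1 - ε) * μ * |σ|) := by linarith
end

section
/- Let a, b, ω > 0, σ ∈ ℝ, C ∈ ℝ, and n ≥ 2. Let z = (x₁, y₁, …, xₙ, yₙ) : ℝ → ℝ^{2n} be a differentiable solution of the network of bistable oscillators, and write z_k(t) = (x_k(t), y_k(t)) ∈ ℝ². Then the function V(t) = ½ Σ_{k=1}^n ‖z_k(t)‖² satisfies, for all t, V'(t) ≤ Σ_{k=1}^n ‖z_k(t)‖²·g(‖z_k(t)‖²) + |C|·Σ_{k=1}^n ‖z_k(t)‖², where g(s) = σ + 2ab·s − b·s². -/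
/-- Lyapunov derivative bound for the network of bistable oscillators. -/
theorem stmt_15 (a b ω σ C : ℝ) (ha : 0 < a) (hb : 0 < b) (hω : 0 < ω)
    (n : ℕ) (hn : 2 ≤ n)
    (x y : Fin n → ℝ → ℝ)
    (hx : ∀ k, ∀ t : ℝ, HasDerivAt (x k)
      (-ω * y k t + x k t * (σ + 2 * a * b * (x k t ^ 2 + y k t ^ 2)
        - b * (x k t ^ 2 + y k t ^ 2) ^ 2)
        + (C / n) * ∑ ℓ ∈ Finset.univ.erase k, x ℓ t) t)
    (hy : ∀ k, ∀ t : ℝ, HasDerivAt (y k)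
      (ω * x k t + y k t * (σ + 2 * a * b * (x k t ^ 2 + y k t ^ 2)
        - b * (x k t ^ 2 + y k t ^ 2) ^ 2)
        + (C / n) * ∑ ℓ ∈ Finset.univ.erase k, y ℓ t) t) :
    ∀ t : ℝ, ∃ d : ℝ,
      HasDerivAt (fun s => (1 / 2 : ℝ) * ∑ k, (x k s ^ 2 + y k s ^ 2)) d t ∧
      d ≤ (∑ k, (x k t ^ 2 + y k t ^ 2) * (σ + 2 * a * b * (x k t ^ 2 + y k t ^ 2)
            - b * (x k t ^ 2 + y k t ^ 2) ^ 2))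
          + |C| * ∑ k, (x k t ^ 2 + y k t ^ 2) := by
  intro t
  have hnpos : (0:ℝ) < n := by positivity
  have hn2 : (2:ℝ) ≤ n := by exact_mod_cast hn
  set D : Fin n → ℝ := fun k => -ω * y k t + x k t * (σ + 2 * a * b * (x k t ^ 2 + y k t ^ 2)
        - b * (x k t ^ 2 + y k t ^ 2) ^ 2)
        + (C / n) * ∑ ℓ ∈ Finset.univ.erase k, x ℓ t with hD
  set E : Fin n → ℝ := fun k => ω * x k t + y k t * (σ + 2 * a * b * (x k t ^ 2 + y k t ^ 2)
        - b * (x k t ^ 2 + y k t ^ 2) ^ 2)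
        + (C / n) * ∑ ℓ ∈ Finset.univ.erase k, y ℓ t with hE
  have hV : HasDerivAt (fun s => (1 / 2 : ℝ) * ∑ k, (x k s ^ 2 + y k s ^ 2))
      ((1/2 : ℝ) * ∑ k, (((2:ℕ) : ℝ) * x k t ^ 1 * D k + ((2:ℕ) : ℝ) * y k t ^ 1 * E k)) t := by
    apply HasDerivAt.const_mul
    apply HasDerivAt.fun_sum
    intro k _
    exact ((hx k t).pow 2).add ((hy k t).pow 2)
  refine ⟨_, hV, ?_⟩
  set Q : Fin n → ℝ := fun k => x k t ^ 2 + y k t ^ 2 with hQ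
  set G : Fin n → ℝ := fun k => σ + 2 * a * b * Q k - b * Q k ^ 2 with hG
  set T : ℝ := ∑ k, Q k with hT
  have hQnn : ∀ k, 0 ≤ Q k := fun k => by positivity
  have hTnn : 0 ≤ T := Finset.sum_nonneg fun k _ => hQnn k
  -- rewrite derivative
  have hrw : (1/2 : ℝ) * ∑ k, (((2:ℕ) : ℝ) * x k t ^ 1 * D k + ((2:ℕ) : ℝ) * y k t ^ 1 * E k)
      = (∑ k, Q k * G k)
        + ∑ k, ∑ ℓ ∈ Finset.univ.erase k, (C/n * (x k t * x ℓ t + y k t * y ℓ t)) := by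
    rw [Finset.mul_sum, ← Finset.sum_add_distrib]
    refine Finset.sum_congr rfl fun k _ => ?_
    have hin : ∑ ℓ ∈ Finset.univ.erase k, (C/n * (x k t * x ℓ t + y k t * y ℓ t))
        = C/n * (x k t * ∑ ℓ ∈ Finset.univ.erase k, x ℓ t
            + y k t * ∑ ℓ ∈ Finset.univ.erase k, y ℓ t) := by
      rw [mul_add, Finset.mul_sum, Finset.mul_sum, Finset.mul_sum, Finset.mul_sum,
        ← Finset.sum_add_distrib]
      exact Finset.sum_congr rfl fun ℓ _ => by ring
    rw [hin, hD, hE, hQ, hG]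
    ring
  rw [hrw]
  have hpt : ∀ k ℓ : Fin n, C/n * (x k t * x ℓ t + y k t * y ℓ t)
      ≤ |C|/n * ((Q k + Q ℓ)/2) := by
    intro k ℓ
    have h1 : C/n * (x k t * x ℓ t + y k t * y ℓ t)
        ≤ |C/n| * |x k t * x ℓ t + y k t * y ℓ t| := by
      calc C/n * (x k t * x ℓ t + y k t * y ℓ t)
          ≤ |C/n * (x k t * x ℓ t + y k t * y ℓ t)| := le_abs_self _
        _ = |C/n| * |x k t * x ℓ t + y k t * y ℓ t| := abs_mul _ _
    have h2 : |x k t * x ℓ t + y k t * y ℓ t| ≤ (Q k + Q ℓ)/2 := by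
      rw [abs_le]
      constructor <;> simp only [hQ] <;>
        nlinarith [sq_nonneg (x k t + x ℓ t), sq_nonneg (x k t - x ℓ t),
          sq_nonneg (y k t + y ℓ t), sq_nonneg (y k t - y ℓ t)]
    have h3 : |C/n| = |C|/n := by
      rw [abs_div, abs_of_pos hnpos]
    calc C/n * (x k t * x ℓ t + y k t * y ℓ t)
        ≤ |C/n| * |x k t * x ℓ t + y k t * y ℓ t| := h1
      _ ≤ |C/n| * ((Q k + Q ℓ)/2) := by
          apply mul_le_mul_of_nonneg_left h2 (abs_nonneg _)
      _ = |C|/n * ((Q k + Q ℓ)/2) := by rw [h3]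
  have hcoupling : ∑ k, ∑ ℓ ∈ Finset.univ.erase k, (C/n * (x k t * x ℓ t + y k t * y ℓ t))
      ≤ |C| * T := by
    have hmid : ∑ k, ∑ ℓ ∈ Finset.univ.erase k, (C/n * (x k t * x ℓ t + y k t * y ℓ t))
        ≤ ∑ k : Fin n, (|C|/n * ((((n:ℝ)-1) * Q k + (T - Q k))/2)) := by
      apply Finset.sum_le_sum
      intro k _
      have : ∑ ℓ ∈ Finset.univ.erase k, (C/n * (x k t * x ℓ t + y k t * y ℓ t))
          ≤ ∑ ℓ ∈ Finset.univ.erase k, (|C|/n * ((Q k + Q ℓ)/2)) :=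
        Finset.sum_le_sum fun ℓ _ => hpt k ℓ
      refine this.trans_eq ?_
      rw [← Finset.mul_sum]
      congr 1
      rw [← Finset.sum_div, Finset.sum_add_distrib, Finset.sum_const,
        Finset.card_erase_of_mem (Finset.mem_univ k), Finset.card_univ, Fintype.card_fin,
        Finset.sum_erase_eq_sub (Finset.mem_univ k), ← hT]
      have : ((n - 1 : ℕ) : ℝ) = (n:ℝ) - 1 := by
        rw [Nat.cast_sub (by omega)]; norm_num
      rw [nsmul_eq_mul, this]
    refine hmid.trans ?_
    have hsum : ∑ k : Fin n, (|C|/n * ((((n:ℝ)-1) * Q k + (T - Q k))/2))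
        = |C|/n * ((((n:ℝ)-1) * T + ((n:ℝ) * T - T))/2) := by
      rw [← Finset.mul_sum]
      congr 1
      rw [← Finset.sum_div, Finset.sum_add_distrib, ← Finset.mul_sum, Finset.sum_sub_distrib,
        Finset.sum_const, Finset.card_univ, Fintype.card_fin, nsmul_eq_mul, ← hT]
    rw [hsum]
    have hX : ((((n:ℝ)-1) * T + ((n:ℝ) * T - T))/2) = ((n:ℝ)-1) * T := by ring
    rw [hX, div_mul_eq_mul_div, div_le_iff₀ hnpos]
    nlinarith [mul_nonneg (abs_nonneg C) hTnn]
  have : ∑ k, Q k * G k = ∑ k, (x k t ^ 2 + y k t ^ 2) * (σ + 2 * a * b * (x k t ^ 2 + y k t ^ 2)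
      - b * (x k t ^ 2 + y k t ^ 2) ^ 2) := rfl
  linarith [hcoupling]
end

section
/- Let ω, σ ∈ ℝ, C ∈ ℝ, and n ≥ 2. Let A ∈ ℂ^{2n×2n} be the Jacobian of the network of bistable oscillators at the origin, i.e., the block matrix whose k-th 2×2 diagonal block is M = [[σ, −ω], [ω, σ]] and whose off-diagonal (k, ℓ) blocks (k ≠ ℓ) are (C/n)·I₂. Then the vector w ∈ ℂ^{2n} defined by w_{2k−1} = 1 and w_{2k} = i for k = 1, …, n satisfies A·w = (σ + C(n−1)/n − iω)·w; in particular, σ + C(n−1)/n + iω and its conjugate are eigenvalues of A, and if C(n−1)/n > −σ then A has an eigenvalue with positive real part (so the equilibrium z = 0 of the network is linearly unstable). -/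
open Matrix in
lemma mem_spec_of_mulVec {m : Type*} [Fintype m] [DecidableEq m] (A : Matrix m m ℂ)
    {μ : ℂ} {v : m → ℂ} (hv : v ≠ 0) (h : A.mulVec v = μ • v) : μ ∈ spectrum ℂ A := by
  rw [← AlgEquiv.spectrum_eq (Matrix.toLinAlgEquiv (Pi.basisFun ℂ m)),
    ← Module.End.hasEigenvalue_iff_mem_spectrum]
  apply Module.End.hasEigenvalue_of_hasEigenvector (x := v)
  refine ⟨Module.End.mem_eigenspace_iff.mpr ?_, hv⟩
  rw [Matrix.toLinAlgEquiv_apply]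
  funext i
  have h2 := congrFun h i
  simp only [mulVec, Pi.smul_apply, smul_eq_mul] at h2
  have hr : ⇑((Pi.basisFun ℂ m).repr v) = v := by ext j; simp
  simpa [Finset.sum_apply, Pi.basisFun_apply, Pi.single_apply, Pi.basisFun_repr, mulVec, hr] using h2

lemma sum_ite_const' {α : Type*} [Fintype α] [DecidableEq α] (k : α) (X Y : ℂ) :
    ∑ ℓ : α, (if ℓ = k then X else Y) = X + ((Fintype.card α : ℂ) - 1) * Y := by
  have e : ∀ ℓ : α, (if ℓ = k then X else Y) = (if ℓ = k then X - Y else 0) + Y := by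
    intro ℓ; split <;> ring
  simp_rw [e]
  rw [Finset.sum_add_distrib, Finset.sum_ite_eq' Finset.univ k (fun _ => X - Y),
    Finset.sum_const]
  simp [Finset.card_univ, nsmul_eq_mul]
  ring

lemma mv_calc (ω σ C : ℝ) (n : ℕ) (hn : 2 ≤ n)
    (A : Matrix (Fin n × Fin 2) (Fin n × Fin 2) ℂ)
    (hAd : ∀ k : Fin n, A (k, 0) (k, 0) = (σ : ℂ) ∧ A (k, 0) (k, 1) = -(ω : ℂ) ∧
      A (k, 1) (k, 0) = (ω : ℂ) ∧ A (k, 1) (k, 1) = (σ : ℂ))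
    (hAo : ∀ k ℓ : Fin n, k ≠ ℓ → ∀ i j : Fin 2,
      A (k, i) (ℓ, j) = if i = j then (C : ℂ) / (n : ℂ) else 0)
    (a b : ℂ) (v : Fin n × Fin 2 → ℂ) (hv : ∀ k : Fin n, v (k, 0) = a ∧ v (k, 1) = b)
    (k : Fin n) :
    A.mulVec v (k, 0) = (σ : ℂ) * a - (ω : ℂ) * b + ((n : ℂ) - 1) * ((C : ℂ) / n) * a ∧
    A.mulVec v (k, 1) = (ω : ℂ) * a + (σ : ℂ) * b + ((n : ℂ) - 1) * ((C : ℂ) / n) * b := by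
  obtain ⟨hd1, hd2, hd3, hd4⟩ := hAd k
  have hcard : (Fintype.card (Fin n) : ℂ) = (n : ℂ) := by simp
  constructor
  · have : A.mulVec v (k, 0) = ∑ ℓ : Fin n, ∑ j : Fin 2, A (k, 0) (ℓ, j) * v (ℓ, j) := by
      simp [Matrix.mulVec, dotProduct, Fintype.sum_prod_type]
    rw [this]
    have e : ∀ ℓ : Fin n, (∑ j : Fin 2, A (k, 0) (ℓ, j) * v (ℓ, j)) =
        if ℓ = k then (σ : ℂ) * a - (ω : ℂ) * b else ((C : ℂ) / n) * a := by
      intro ℓ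
      rcases eq_or_ne ℓ k with rfl | h
      · simp [Fin.sum_univ_two, hd1, hd2, (hv ℓ).1, (hv ℓ).2]; ring
      · rw [Fin.sum_univ_two, hAo k ℓ (Ne.symm h) 0 0, hAo k ℓ (Ne.symm h) 0 1,
          (hv ℓ).1, (hv ℓ).2]
        simp [h]
    rw [Finset.sum_congr rfl (fun ℓ _ => e ℓ), sum_ite_const', hcard]
    ring
  · have : A.mulVec v (k, 1) = ∑ ℓ : Fin n, ∑ j : Fin 2, A (k, 1) (ℓ, j) * v (ℓ, j) := by
      simp [Matrix.mulVec, dotProduct, Fintype.sum_prod_type]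
    rw [this]
    have e : ∀ ℓ : Fin n, (∑ j : Fin 2, A (k, 1) (ℓ, j) * v (ℓ, j)) =
        if ℓ = k then (ω : ℂ) * a + (σ : ℂ) * b else ((C : ℂ) / n) * b := by
      intro ℓ
      rcases eq_or_ne ℓ k with rfl | h
      · simp [Fin.sum_univ_two, hd3, hd4, (hv ℓ).1, (hv ℓ).2]
      · rw [Fin.sum_univ_two, hAo k ℓ (Ne.symm h) 1 0, hAo k ℓ (Ne.symm h) 1 1,
          (hv ℓ).1, (hv ℓ).2]
        simp [h]
    rw [Finset.sum_congr rfl (fun ℓ _ => e ℓ), sum_ite_const', hcard]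
    ring

/-- the Jacobian of the network at the origin has w = (1, i, 1, i, …)
as an eigenvector with eigenvalue σ + C(n-1)/n - iω; hence σ + C(n-1)/n ± iω are
eigenvalues, and when C(n-1)/n > -σ the origin is linearly unstable. -/
theorem stmt_17 (ω σ C : ℝ) (n : ℕ) (hn : 2 ≤ n)
    (A : Matrix (Fin n × Fin 2) (Fin n × Fin 2) ℂ)
    (hAd : ∀ k : Fin n, A (k, 0) (k, 0) = (σ : ℂ) ∧ A (k, 0) (k, 1) = -(ω : ℂ) ∧
      A (k, 1) (k, 0) = (ω : ℂ) ∧ A (k, 1) (k, 1) = (σ : ℂ))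
    (hAo : ∀ k ℓ : Fin n, k ≠ ℓ → ∀ i j : Fin 2,
      A (k, i) (ℓ, j) = if i = j then (C : ℂ) / (n : ℂ) else 0)
    (w : Fin n × Fin 2 → ℂ)
    (hw : ∀ k : Fin n, w (k, 0) = 1 ∧ w (k, 1) = Complex.I) :
    A.mulVec w = ((σ : ℂ) + (C : ℂ) * ((n : ℂ) - 1) / (n : ℂ) - Complex.I * (ω : ℂ)) • w ∧
    ((σ : ℂ) + (C : ℂ) * ((n : ℂ) - 1) / (n : ℂ) + Complex.I * (ω : ℂ)) ∈ spectrum ℂ A ∧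
    ((σ : ℂ) + (C : ℂ) * ((n : ℂ) - 1) / (n : ℂ) - Complex.I * (ω : ℂ)) ∈ spectrum ℂ A ∧
    (C * ((n : ℝ) - 1) / (n : ℝ) > -σ → ∃ μ ∈ spectrum ℂ A, 0 < μ.re) := by
  have hn0 : (0 : ℕ) < n := by omega
  set lamm : ℂ := (σ : ℂ) + (C : ℂ) * ((n : ℂ) - 1) / (n : ℂ) - Complex.I * (ω : ℂ) with hlm
  set lamp : ℂ := (σ : ℂ) + (C : ℂ) * ((n : ℂ) - 1) / (n : ℂ) + Complex.I * (ω : ℂ) with hlp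
  -- eigen equation for w
  have hmw : A.mulVec w = lamm • w := by
    funext p
    obtain ⟨k, i⟩ := p
    obtain ⟨h0, h1⟩ := mv_calc ω σ C n hn A hAd hAo 1 Complex.I w hw k
    fin_cases i
    · show A.mulVec w (k, 0) = (lamm • w) (k, 0)
      rw [h0, Pi.smul_apply, (hw k).1, smul_eq_mul, hlm]; ring
    · show A.mulVec w (k, 1) = (lamm • w) (k, 1)
      rw [h1, Pi.smul_apply, (hw k).2, smul_eq_mul, hlm]
      linear_combination (ω : ℂ) * Complex.I_sq
  -- second eigenvector
  set w' : Fin n × Fin 2 → ℂ := fun p => if p.2 = 0 then 1 else -Complex.I with hw'def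
  have hw' : ∀ k : Fin n, w' (k, 0) = 1 ∧ w' (k, 1) = -Complex.I := by
    intro k; constructor <;> simp [hw'def]
  have hmw' : A.mulVec w' = lamp • w' := by
    funext p
    obtain ⟨k, i⟩ := p
    obtain ⟨h0, h1⟩ := mv_calc ω σ C n hn A hAd hAo 1 (-Complex.I) w' hw' k
    fin_cases i
    · show A.mulVec w' (k, 0) = (lamp • w') (k, 0)
      rw [h0, Pi.smul_apply, (hw' k).1, smul_eq_mul, hlp]
      ring
    · show A.mulVec w' (k, 1) = (lamp • w') (k, 1)
      rw [h1, Pi.smul_apply, (hw' k).2, smul_eq_mul, hlp]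
      linear_combination (ω : ℂ) * Complex.I_sq
  have k0 : Fin n := ⟨0, hn0⟩
  have hwne : w ≠ 0 := by
    intro h
    have := (hw k0).1
    rw [h] at this
    simp at this
  have hw'ne : w' ≠ 0 := by
    intro h
    have := (hw' k0).1
    rw [h] at this
    simp at this
  have hsm : lamm ∈ spectrum ℂ A := mem_spec_of_mulVec A hwne hmw
  have hsp : lamp ∈ spectrum ℂ A := mem_spec_of_mulVec A hw'ne hmw'
  refine ⟨hmw, hsp, hsm, fun hC => ⟨lamp, hsp, ?_⟩⟩
  have hcast : lamp = ((σ + C * ((n : ℝ) - 1) / n : ℝ) : ℂ) + Complex.I * (ω : ℂ) := by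
    rw [hlp]; push_cast; ring
  rw [hcast]
  simp only [Complex.add_re, Complex.ofReal_re, Complex.mul_re, Complex.I_re, Complex.I_im,
    Complex.ofReal_im]
  linarith
end
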